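/- arXiv:2308.14783 — 6 statements merged into one kernel-verified Lean document; each statement's English description precedes it below -/
import Mathlib

section
/- For every w ∈ ℝ^d and every α ∈ ℝ^m, the duality gap satisfies P(w) − D(α) ≥ (λ/2)·‖w − Aα‖₂². In particular, P(w) ≥ D(α) for all w and α (weak duality). -/
open scoped BigOperators InnerProductSpace

/-- Weak duality with the quadratic gap bound:
`P(w) − D(α) ≥ (λ/2)·‖w − Aα‖²`, and in particular `P(w) ≥ D(α)`. -/
theorem weak_duality_gap_bound
    (m d : ℕ) (hm : 0 < m) (hd : 0 < d)
    (x : Fin m → EuclideanSpace ℝ (Fin d)) (hx : ∀ i, ‖x i‖ ≤ 1)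
    (lam : ℝ) (hlam : 0 < lam)
    (ℓ ℓs : Fin m → ℝ → ℝ)
    (hFY : ∀ i, ∀ a b : ℝ, a * b ≤ ℓ i a + ℓs i b)
    (A : (Fin m → ℝ) → EuclideanSpace ℝ (Fin d))
    (hA : ∀ α, A α = (1 / (lam * m)) • ∑ i, α i • x i)
    (P : EuclideanSpace ℝ (Fin d) → ℝ)
    (hP : ∀ w, P w = lam / 2 * ‖w‖ ^ 2 + (1 / m) * ∑ i, ℓ i ⟪w, x i⟫_ℝ)
    (D : (Fin m → ℝ) → ℝ)
    (hD : ∀ α, D α = -(lam / 2) * ‖A α‖ ^ 2 - (1 / m) * ∑ i, ℓs i (-(α i)))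
    (w : EuclideanSpace ℝ (Fin d)) (α : Fin m → ℝ) :
    lam / 2 * ‖w - A α‖ ^ 2 ≤ P w - D α ∧ D α ≤ P w := by
  have hm' : (0:ℝ) < m := by exact_mod_cast hm
  -- inner product of w with A α
  have hinner : ⟪w, A α⟫_ℝ = (1 / (lam * m)) * ∑ i, α i * ⟪w, x i⟫_ℝ := by
    rw [hA, real_inner_smul_right, inner_sum]
    congr 1
    exact Finset.sum_congr rfl fun i _ => real_inner_smul_right w (x i) (α i)
  -- Fenchel-Young pointwise
  have hpt : ∀ i, -(α i * ⟪w, x i⟫_ℝ) ≤ ℓ i ⟪w, x i⟫_ℝ + ℓs i (-(α i)) := by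
    intro i
    have := hFY i ⟪w, x i⟫_ℝ (-(α i))
    nlinarith [this]
  have hsum : -(∑ i, α i * ⟪w, x i⟫_ℝ) ≤
      (∑ i, ℓ i ⟪w, x i⟫_ℝ) + ∑ i, ℓs i (-(α i)) := by
    rw [← Finset.sum_neg_distrib, ← Finset.sum_add_distrib]
    exact Finset.sum_le_sum fun i _ => hpt i
  obtain ⟨S, hS⟩ : ∃ S, S = ∑ i, α i * ⟪w, x i⟫_ℝ := ⟨_, rfl⟩
  rw [← hS] at hsum
  have hinner2 : lam * ⟪w, A α⟫_ℝ = (1 / (m:ℝ)) * S := by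
    rw [hinner, ← hS]; field_simp
  have hnorm : ‖w - A α‖ ^ 2 = ‖w‖ ^ 2 - 2 * ⟪w, A α⟫_ℝ + ‖A α‖ ^ 2 := by
    rw [@norm_sub_sq_real]
  have hgap : lam / 2 * ‖w - A α‖ ^ 2 ≤ P w - D α := by
    rw [hP, hD, hnorm]
    have hfrac : (0:ℝ) ≤ 1 / m := by positivity
    have h1 : (1/(m:ℝ)) * (-S) ≤ (1/(m:ℝ)) * ((∑ i, ℓ i ⟪w, x i⟫_ℝ) + ∑ i, ℓs i (-(α i))) :=
      mul_le_mul_of_nonneg_left hsum hfrac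
    have h2 : lam * ⟪w, A α⟫_ℝ = (1 / (m:ℝ)) * S := hinner2
    have hexp : lam / 2 * (‖w‖ ^ 2 - 2 * ⟪w, A α⟫_ℝ + ‖A α‖ ^ 2)
        = lam / 2 * ‖w‖ ^ 2 - lam * ⟪w, A α⟫_ℝ + lam / 2 * ‖A α‖ ^ 2 := by ring
    linarith [h1, h2, hexp]
  refine ⟨hgap, ?_⟩
  nlinarith [hgap, sq_nonneg ‖w - A α‖, hlam.le]
end

section
/- (Per-step expected improvement of GDCA-Tree.) Suppose each ℓ*_i is convex, so that D is concave. Let (Ω, 𝔉, μ) be a probability space, let S_1, …, S_K be pairwise disjoint subsets of {1, …, m}, and let Δ_1, …, Δ_K : Ω → ℝ^m be measurable maps with (Δ_k(ω))_i = 0 for all i ∉ S_k and all ω. Fix α ∈ ℝ^m and assume for each k that the set {D(β) : β_i = α_i for all i ∉ S_k} is bounded above, so ε_{S_k} is defined at α and at α + Δ_k(ω). Let β_1, …, β_K ∈ [0,1] with Σ_k β_k = 1 and Θ_1, …, Θ_K ∈ [0,1). Assume ω ↦ D(α + Σ_k β_k Δ_k(ω)) and ω ↦ ε_{S_k}(α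 + Δ_k(ω)) (for each k) are integrable, and that for each k, ∫ ε_{S_k}(α + Δ_k(ω)) dμ(ω) ≤ Θ_k · ε_{S_k}(α). Then ∫ D(α + Σ_k β_k Δ_k(ω)) dμ(ω) − D(α) ≥ ( min_{k=1,…,K} (1 − Θ_k) β_k ) · Σ_{k=1}^K ε_{S_k}(α). -/
open scoped BigOperators
open MeasureTheory

/-- Local sub-optimality gap over an index set `S`:
`ε_S(α) = sup {D(β) : β agrees with α outside S} − D(α)`. -/
noncomputable def locGap {m : ℕ} (D : (Fin m → ℝ) → ℝ) (S : Set (Fin m))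
    (α : Fin m → ℝ) : ℝ :=
  sSup (D '' {β | ∀ i ∉ S, β i = α i}) - D α

lemma convexOn_finset_sum' {ι E : Type*} [AddCommGroup E] [Module ℝ E]
    {s : Set E} (t : Finset ι) (f : ι → E → ℝ)
    (h : ∀ i ∈ t, ConvexOn ℝ s (f i)) (hs : Convex ℝ s) :
    ConvexOn ℝ s (fun x => ∑ i ∈ t, f i x) := by
  classical
  induction t using Finset.induction_on with
  | empty => simpa using convexOn_const 0 hs
  | insert _ _ hnot ih =>
      simp only [Finset.sum_insert hnot]
      exact (h _ (Finset.mem_insert_self _ _)).add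
        (ih fun i hi => h i (Finset.mem_insert_of_mem hi))

lemma convexOn_norm_sq' {E : Type*} [NormedAddCommGroup E] [NormedSpace ℝ E] :
    ConvexOn ℝ Set.univ (fun y : E => ‖y‖ ^ 2) := by
  refine ⟨convex_univ, fun p _ q _ a b ha hb hab => ?_⟩
  simp only [smul_eq_mul]
  have h1 : ‖a • p + b • q‖ ≤ a * ‖p‖ + b * ‖q‖ := by
    calc ‖a • p + b • q‖ ≤ ‖a • p‖ + ‖b • q‖ := norm_add_le _ _
    _ = a * ‖p‖ + b * ‖q‖ := by rw [norm_smul, norm_smul, Real.norm_of_nonneg ha,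
        Real.norm_of_nonneg hb]
  have h2 : ‖a • p + b • q‖ ^ 2 ≤ (a * ‖p‖ + b * ‖q‖) ^ 2 :=
    pow_le_pow_left₀ (norm_nonneg _) h1 2
  nlinarith [sq_nonneg (‖p‖ - ‖q‖), mul_nonneg ha hb, norm_nonneg p, norm_nonneg q]

lemma concaveD (m d : ℕ)
    (x : Fin m → EuclideanSpace ℝ (Fin d))
    (lam : ℝ)
    (ℓs : Fin m → ℝ → ℝ) (hconv : ∀ i, ConvexOn ℝ Set.univ (ℓs i))
    (hlam : 0 < lam)
    (hm : 0 < m)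
    (A : (Fin m → ℝ) → EuclideanSpace ℝ (Fin d))
    (hA : ∀ α, A α = (1 / (lam * m)) • ∑ i, α i • x i)
    (D : (Fin m → ℝ) → ℝ)
    (hD : ∀ α, D α = -(lam / 2) * ‖A α‖ ^ 2 - (1 / m) * ∑ i, ℓs i (-(α i))) :
    ConcaveOn ℝ Set.univ D := by
  have hAlin : IsLinearMap ℝ A := by
    constructor
    · intro a b
      simp only [hA, Pi.add_apply, add_smul, Finset.sum_add_distrib, smul_add]
    · intro c a
      simp only [hA, Pi.smul_apply, smul_eq_mul, mul_smul, ← Finset.smul_sum]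
      exact smul_comm _ c _
  set L : (Fin m → ℝ) →ₗ[ℝ] EuclideanSpace ℝ (Fin d) := IsLinearMap.mk' A hAlin with hL
  have hns : ConvexOn ℝ Set.univ (fun y : EuclideanSpace ℝ (Fin d) => ‖y‖ ^ 2) :=
    convexOn_norm_sq'
  have h1 : ConvexOn ℝ Set.univ (fun α : Fin m → ℝ => ‖A α‖ ^ 2) := by
    have := hns.comp_linearMap L
    exact this
  have h2 : ConcaveOn ℝ Set.univ (fun α : Fin m → ℝ => -(lam / 2) * ‖A α‖ ^ 2) := by
    have h := (h1.smul (c := lam / 2) (by positivity)).neg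
    have heq2 : (fun α : Fin m → ℝ => -(lam / 2) * ‖A α‖ ^ 2)
        = -(fun α : Fin m → ℝ => (lam / 2) • ‖A α‖ ^ 2) := by
      funext a; simp [neg_mul]
    rw [heq2]; exact h
  have h3 : ConvexOn ℝ Set.univ (fun α : Fin m → ℝ => ∑ i, ℓs i (-(α i))) := by
    refine convexOn_finset_sum' Finset.univ _ (fun i _ => ?_) convex_univ
    have := (hconv i).comp_linearMap (-(LinearMap.proj i : (Fin m → ℝ) →ₗ[ℝ] ℝ))
    exact this
  have h4 : ConcaveOn ℝ Set.univ (fun α : Fin m → ℝ =>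
      -((1 : ℝ) / m) * ∑ i, ℓs i (-(α i))) := by
    have h := (h3.smul (c := (1 : ℝ) / m) (by positivity)).neg
    have heq2 : (fun α : Fin m → ℝ => -((1 : ℝ) / m) * ∑ i, ℓs i (-(α i)))
        = -(fun α : Fin m → ℝ => ((1 : ℝ) / m) • ∑ i, ℓs i (-(α i))) := by
      funext a; simp [neg_mul]
    rw [heq2]; exact h
  have := h2.add h4
  have heq : D = fun α => -(lam / 2) * ‖A α‖ ^ 2 + -((1 : ℝ) / m) * ∑ i, ℓs i (-(α i)) := by
    funext a; rw [hD]; ring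
  rw [heq]; exact this

/-- Per-step expected improvement of GDCA-Tree: the expected dual increase of the
weighted block update is at least `(minₖ (1 − Θₖ) βₖ) · Σₖ ε_{Sₖ}(α)`. -/
theorem gdca_per_step_expected_improvement
    (m d K : ℕ) (hm : 0 < m) (hd : 0 < d) (hK : 0 < K)
    (x : Fin m → EuclideanSpace ℝ (Fin d)) (hx : ∀ i, ‖x i‖ ≤ 1)
    (lam : ℝ) (hlam : 0 < lam)
    (ℓs : Fin m → ℝ → ℝ) (hconv : ∀ i, ConvexOn ℝ Set.univ (ℓs i))
    (A : (Fin m → ℝ) → EuclideanSpace ℝ (Fin d))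
    (hA : ∀ α, A α = (1 / (lam * m)) • ∑ i, α i • x i)
    (D : (Fin m → ℝ) → ℝ)
    (hD : ∀ α, D α = -(lam / 2) * ‖A α‖ ^ 2 - (1 / m) * ∑ i, ℓs i (-(α i)))
    (Ω : Type*) [MeasurableSpace Ω] (μ : Measure Ω) [IsProbabilityMeasure μ]
    (S : Fin K → Set (Fin m))
    (hdisj : ∀ k k', k ≠ k' → Disjoint (S k) (S k'))
    (Δ : Fin K → Ω → Fin m → ℝ) (hmeas : ∀ k, Measurable (Δ k))
    (hsupp : ∀ k ω, ∀ i ∉ S k, Δ k ω i = 0)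
    (α : Fin m → ℝ)
    (hbdd : ∀ k, BddAbove (D '' {β | ∀ i ∉ S k, β i = α i}))
    (β : Fin K → ℝ) (hβ0 : ∀ k, 0 ≤ β k) (hβ1 : ∀ k, β k ≤ 1)
    (hβsum : ∑ k, β k = 1)
    (Θ : Fin K → ℝ) (hΘ0 : ∀ k, 0 ≤ Θ k) (hΘ1 : ∀ k, Θ k < 1)
    (hintD : Integrable (fun ω => D (α + ∑ k, β k • Δ k ω)) μ)
    (hintε : ∀ k, Integrable (fun ω => locGap D (S k) (α + Δ k ω)) μ)
    (himp : ∀ k, ∫ ω, locGap D (S k) (α + Δ k ω) ∂μ ≤ Θ k * locGap D (S k) α) :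
    (Finset.univ.inf' ⟨⟨0, hK⟩, Finset.mem_univ _⟩ fun k => (1 - Θ k) * β k) *
        ∑ k, locGap D (S k) α ≤
      (∫ ω, D (α + ∑ k, β k • Δ k ω) ∂μ) - D α := by
  have hconc : ConcaveOn ℝ Set.univ D := concaveD m d x lam ℓs hconv hlam hm A hA D hD
  set G : Fin K → ℝ := fun k => sSup (D '' {β | ∀ i ∉ S k, β i = α i}) with hG
  set ε : Fin K → ℝ := fun k => locGap D (S k) α with hε
  -- the constraint set is unchanged by the update
  have hset : ∀ k ω, {β : Fin m → ℝ | ∀ i ∉ S k, β i = (α + Δ k ω) i}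
      = {β : Fin m → ℝ | ∀ i ∉ S k, β i = α i} := by
    intro k ω
    ext b
    simp only [Set.mem_setOf_eq, Pi.add_apply]
    refine forall_congr' fun i => forall_congr' fun hi => ?_
    rw [hsupp k ω i hi, add_zero]
  have hgap1 : ∀ k ω, locGap D (S k) (α + Δ k ω) = G k - D (α + Δ k ω) := by
    intro k ω; rw [locGap, hset]
  have hεeq : ∀ k, ε k = G k - D α := fun k => rfl
  have hε0 : ∀ k, 0 ≤ ε k := by
    intro k
    have : D α ≤ G k := le_csSup (hbdd k) ⟨α, fun i _ => rfl, rfl⟩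
    simpa [hεeq k] using sub_nonneg.mpr this
  -- integrability of D (α + Δ k ·)
  have hDk : ∀ k, Integrable (fun ω => D (α + Δ k ω)) μ := by
    intro k
    have h := (integrable_const (G k)).sub (hintε k)
    refine h.congr (Filter.Eventually.of_forall fun ω => ?_)
    simp only [Pi.sub_apply]
    rw [hgap1 k ω]; ring
  -- expected value of D (α + Δ k ·)
  have hEDk : ∀ k, G k - Θ k * ε k ≤ ∫ ω, D (α + Δ k ω) ∂μ := by
    intro k
    have h : ∫ ω, D (α + Δ k ω) ∂μ = G k - ∫ ω, locGap D (S k) (α + Δ k ω) ∂μ := by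
      calc ∫ ω, D (α + Δ k ω) ∂μ
          = ∫ ω, (G k - locGap D (S k) (α + Δ k ω)) ∂μ := by
            refine integral_congr_ae (Filter.Eventually.of_forall fun ω => ?_)
            dsimp only
            rw [hgap1 k ω]; ring
        _ = G k - ∫ ω, locGap D (S k) (α + Δ k ω) ∂μ := by
            rw [integral_sub (integrable_const _) (hintε k), integral_const]
            simp
    rw [h]
    have := himp k
    linarith
  -- pointwise Jensen
  have hpt : ∀ ω, ∑ k, β k * D (α + Δ k ω) ≤ D (α + ∑ k, β k • Δ k ω) := by
    intro ω
    have h := hconc.le_map_sum (t := Finset.univ) (w := β) (p := fun k => α + Δ k ω)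
      (fun k _ => hβ0 k) hβsum (fun k _ => Set.mem_univ _)
    have hsum : ∑ k, β k • (α + Δ k ω) = α + ∑ k, β k • Δ k ω := by
      simp only [smul_add, Finset.sum_add_distrib, ← Finset.sum_smul, hβsum, one_smul]
    rw [hsum] at h
    simpa [smul_eq_mul] using h
  have hint2 : Integrable (fun ω => ∑ k, β k * D (α + Δ k ω)) μ :=
    integrable_finset_sum _ fun k _ => (hDk k).const_mul _
  have hstep : ∑ k, β k * ∫ ω, D (α + Δ k ω) ∂μ ≤ ∫ ω, D (α + ∑ k, β k • Δ k ω) ∂μ := by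
    have h := integral_mono hint2 hintD hpt
    rw [integral_finset_sum _ (fun k _ => (hDk k).const_mul _)] at h
    simpa [integral_const_mul] using h
  -- combine
  have hmin : ∀ k, (Finset.univ.inf' ⟨⟨0, hK⟩, Finset.mem_univ _⟩ fun k => (1 - Θ k) * β k)
      ≤ (1 - Θ k) * β k := fun k => Finset.inf'_le _ (Finset.mem_univ k)
  calc (Finset.univ.inf' ⟨⟨0, hK⟩, Finset.mem_univ _⟩ fun k => (1 - Θ k) * β k) * ∑ k, ε k
      = ∑ k, (Finset.univ.inf' ⟨⟨0, hK⟩, Finset.mem_univ _⟩ fun k => (1 - Θ k) * β k) * ε k := by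
        rw [Finset.mul_sum]
    _ ≤ ∑ k, ((1 - Θ k) * β k) * ε k :=
        Finset.sum_le_sum fun k _ => mul_le_mul_of_nonneg_right (hmin k) (hε0 k)
    _ = ∑ k, β k * ((G k - Θ k * ε k) - D α) := by
        refine Finset.sum_congr rfl fun k _ => ?_
        rw [hεeq k]; ring
    _ ≤ ∑ k, β k * ((∫ ω, D (α + Δ k ω) ∂μ) - D α) := by
        refine Finset.sum_le_sum fun k _ => ?_
        exact mul_le_mul_of_nonneg_left (by linarith [hEDk k]) (hβ0 k)
    _ = (∑ k, β k * ∫ ω, D (α + Δ k ω) ∂μ) - D α := by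
        simp only [mul_sub, Finset.sum_sub_distrib, ← Finset.sum_mul, hβsum, one_mul]
    _ ≤ (∫ ω, D (α + ∑ k, β k • Δ k ω) ∂μ) - D α := by linarith [hstep]
end

section
/- (One-iteration contraction of the sub-optimality gap at a tree node, Theorem 1 for a single iteration.) In the setting of the per-step expected improvement statement (convex ℓ*_i, disjoint blocks S_1, …, S_K, block-supported random updates Δ_k, weights β_k summing to 1, Θ_k ∈ [0,1), expected local improvement ∫ ε_{S_k}(α + Δ_k) dμ ≤ Θ_k ε_{S_k}(α), and integrability), let Q = S_1 ∪ ⋯ ∪ S_K and assume additionally that {D(β) : β_i = α_i for all i ∉ Q} is bounded above, that ω ↦ ε_Q(α + Σ_k β_k Δ_k(ω)) is integrable, and that for γ > 0, ρ ≥ 0 the local-to-global bound Σ_{k=1}^K ε_{S_k}(α) ≥ (λmγ/(ρ + λmγ)) · ε_Q(α) holds. Then ∫ ε_Q(α + Σ_k β_k Δ_k(ω)) dμ(ω) ≤ ( 1 − ( min_{k=1,…,K} (1 − Θ_k) β_k ) · λmγ/(ρ + λmγ) ) · ε_Q(α). -/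
open scoped BigOperators
open MeasureTheory

set_option maxHeartbeats 1000000 in
/-- One-iteration contraction of the sub-optimality gap at a tree node
(Theorem 1 for a single iteration):
`𝔼[ε_Q(α + Σₖ βₖ Δₖ)] ≤ (1 − (minₖ (1 − Θₖ)βₖ)·λmγ/(ρ + λmγ)) · ε_Q(α)`. -/
theorem gdca_one_iteration_contraction
    (m d K : ℕ) (hm : 0 < m) (hd : 0 < d) (hK : 0 < K)
    (x : Fin m → EuclideanSpace ℝ (Fin d)) (hx : ∀ i, ‖x i‖ ≤ 1)
    (lam : ℝ) (hlam : 0 < lam)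
    (ℓs : Fin m → ℝ → ℝ) (hconv : ∀ i, ConvexOn ℝ Set.univ (ℓs i))
    (A : (Fin m → ℝ) → EuclideanSpace ℝ (Fin d))
    (hA : ∀ α, A α = (1 / (lam * m)) • ∑ i, α i • x i)
    (D : (Fin m → ℝ) → ℝ)
    (hD : ∀ α, D α = -(lam / 2) * ‖A α‖ ^ 2 - (1 / m) * ∑ i, ℓs i (-(α i)))
    (Ω : Type*) [MeasurableSpace Ω] (μ : Measure Ω) [IsProbabilityMeasure μ]
    (S : Fin K → Set (Fin m))
    (hdisj : ∀ k k', k ≠ k' → Disjoint (S k) (S k'))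
    (Q : Set (Fin m)) (hQ : Q = ⋃ k, S k)
    (Δ : Fin K → Ω → Fin m → ℝ) (hmeas : ∀ k, Measurable (Δ k))
    (hsupp : ∀ k ω, ∀ i ∉ S k, Δ k ω i = 0)
    (α : Fin m → ℝ)
    (hbddS : ∀ k, BddAbove (D '' {β | ∀ i ∉ S k, β i = α i}))
    (hbddQ : BddAbove (D '' {β | ∀ i ∉ Q, β i = α i}))
    (β : Fin K → ℝ) (hβ0 : ∀ k, 0 ≤ β k) (hβ1 : ∀ k, β k ≤ 1)
    (hβsum : ∑ k, β k = 1)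
    (Θ : Fin K → ℝ) (hΘ0 : ∀ k, 0 ≤ Θ k) (hΘ1 : ∀ k, Θ k < 1)
    (γ ρ : ℝ) (hγ : 0 < γ) (hρ : 0 ≤ ρ)
    (hintD : Integrable (fun ω => D (α + ∑ k, β k • Δ k ω)) μ)
    (hintε : ∀ k, Integrable (fun ω => locGap D (S k) (α + Δ k ω)) μ)
    (hintQ : Integrable (fun ω => locGap D Q (α + ∑ k, β k • Δ k ω)) μ)
    (himp : ∀ k, ∫ ω, locGap D (S k) (α + Δ k ω) ∂μ ≤ Θ k * locGap D (S k) α)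
    (hlocglob : lam * m * γ / (ρ + lam * m * γ) * locGap D Q α ≤
      ∑ k, locGap D (S k) α) :
    ∫ ω, locGap D Q (α + ∑ k, β k • Δ k ω) ∂μ ≤
      (1 - (Finset.univ.inf' ⟨⟨0, hK⟩, Finset.mem_univ _⟩ fun k => (1 - Θ k) * β k) *
        (lam * m * γ / (ρ + lam * m * γ))) * locGap D Q α := by
  classical
  -- the linear map underlying `A`
  set L : (Fin m → ℝ) →ₗ[ℝ] EuclideanSpace ℝ (Fin d) :=
    (1 / (lam * m)) • (∑ i : Fin m, (LinearMap.proj i).smulRight (x i)) with hL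
  have hAL : ∀ a, A a = L a := by
    intro a
    rw [hA]
    simp [hL, LinearMap.sum_apply]
  -- D is concave
  have hDconc : ConcaveOn ℝ Set.univ D := by
    have hnorm : ConvexOn ℝ Set.univ fun a : Fin m → ℝ => ‖A a‖ ^ 2 := by
      refine ⟨convex_univ, fun p _ q _ a b ha hb hab => ?_⟩
      simp only [smul_eq_mul]
      have hLin : A (a • p + b • q) = a • A p + b • A q := by
        rw [hAL, hAL, hAL, map_add, LinearMap.map_smul, LinearMap.map_smul]
      rw [hLin]
      have h1 : ‖a • A p + b • A q‖ ≤ a * ‖A p‖ + b * ‖A q‖ := by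
        calc ‖a • A p + b • A q‖ ≤ ‖a • A p‖ + ‖b • A q‖ := norm_add_le _ _
          _ = a * ‖A p‖ + b * ‖A q‖ := by
              rw [norm_smul, norm_smul, Real.norm_of_nonneg ha, Real.norm_of_nonneg hb]
      nlinarith [norm_nonneg (a • A p + b • A q), norm_nonneg (A p), norm_nonneg (A q),
        sq_nonneg (‖A p‖ - ‖A q‖), mul_nonneg ha hb]
    have hpiece : ∀ i : Fin m, ConvexOn ℝ Set.univ fun a : Fin m → ℝ => ℓs i (-(a i)) := by
      intro i
      have := (hconv i).comp_linearMap (-(LinearMap.proj i : (Fin m → ℝ) →ₗ[ℝ] ℝ))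
      rw [Set.preimage_univ] at this
      exact this
    have hsum : ∀ t : Finset (Fin m),
        ConvexOn ℝ Set.univ fun a : Fin m → ℝ => ∑ i ∈ t, ℓs i (-(a i)) := by
      intro t
      induction t using Finset.induction_on with
      | empty => simpa using convexOn_const (0 : ℝ) convex_univ
      | @insert j t hj ih =>
          have heq : (fun a : Fin m → ℝ => ∑ i ∈ insert j t, ℓs i (-(a i))) =
              (fun a : Fin m → ℝ => ℓs j (-(a j))) + fun a => ∑ i ∈ t, ℓs i (-(a i)) := by
            funext a; simp [Finset.sum_insert hj]
          rw [heq]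
          exact (hpiece j).add ih
    have h1 : ConvexOn ℝ Set.univ fun a : Fin m → ℝ => (lam / 2) * ‖A a‖ ^ 2 := by
      have h := ConvexOn.smul (𝕜 := ℝ) (c := lam / 2) (by positivity) hnorm
      simpa [smul_eq_mul] using h
    have h2 : ConvexOn ℝ Set.univ fun a : Fin m → ℝ =>
        (1 / (m : ℝ)) * ∑ i, ℓs i (-(a i)) := by
      have h := ConvexOn.smul (𝕜 := ℝ) (c := 1 / (m : ℝ)) (by positivity) (hsum Finset.univ)
      simpa [smul_eq_mul] using h
    have hg := h1.add h2
    have heqD : D = -((fun a : Fin m → ℝ => (lam / 2) * ‖A a‖ ^ 2) +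
        fun a : Fin m → ℝ => (1 / (m : ℝ)) * ∑ i, ℓs i (-(a i))) := by
      funext a
      rw [hD]
      simp only [Pi.neg_apply, Pi.add_apply]
      ring
    rw [heqD]
    exact hg.neg
  -- abbreviations for the suprema
  set MQ : ℝ := sSup (D '' {β' | ∀ i ∉ Q, β' i = α i}) with hMQ
  set Mk : Fin K → ℝ := fun k => sSup (D '' {β' | ∀ i ∉ S k, β' i = α i}) with hMk
  have hgapQα : locGap D Q α = MQ - D α := rfl
  have hgapkα : ∀ k, locGap D (S k) α = Mk k - D α := fun k => rfl
  -- the shifted points agree with α outside the relevant sets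
  have hgapQ : ∀ ω, locGap D Q (α + ∑ k, β k • Δ k ω) =
      MQ - D (α + ∑ k, β k • Δ k ω) := by
    intro ω
    have hset : ∀ i ∉ Q, (α + ∑ k, β k • Δ k ω) i = α i := by
      intro i hi
      have hz : ∀ k, Δ k ω i = 0 := fun k =>
        hsupp k ω i fun h => hi (hQ ▸ Set.mem_iUnion.2 ⟨k, h⟩)
      simp [hz]
    have hsets : {β' : Fin m → ℝ | ∀ i ∉ Q, β' i = (α + ∑ k, β k • Δ k ω) i}
        = {β' : Fin m → ℝ | ∀ i ∉ Q, β' i = α i} :=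
      Set.ext fun β' => ⟨fun h i hi => (h i hi).trans (hset i hi),
        fun h i hi => (h i hi).trans (hset i hi).symm⟩
    unfold locGap
    rw [hsets]
  have hgapk : ∀ k ω, locGap D (S k) (α + Δ k ω) = Mk k - D (α + Δ k ω) := by
    intro k ω
    have hset : ∀ i ∉ S k, (α + Δ k ω) i = α i := by
      intro i hi; simp [hsupp k ω i hi]
    have hsets : {β' : Fin m → ℝ | ∀ i ∉ S k, β' i = (α + Δ k ω) i}
        = {β' : Fin m → ℝ | ∀ i ∉ S k, β' i = α i} :=
      Set.ext fun β' => ⟨fun h i hi => (h i hi).trans (hset i hi),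
        fun h i hi => (h i hi).trans (hset i hi).symm⟩
    unfold locGap
    rw [hsets]
  -- pointwise key inequality, via Jensen (concavity of D)
  have key : ∀ ω, locGap D Q (α + ∑ k, β k • Δ k ω) ≤
      locGap D Q α - ∑ k, β k * locGap D (S k) α
        + ∑ k, β k * locGap D (S k) (α + Δ k ω) := by
    intro ω
    have hrepr : ∑ k, β k • (α + Δ k ω) = α + ∑ k, β k • Δ k ω := by
      have : ∑ k, β k • (α + Δ k ω) = (∑ k, β k) • α + ∑ k, β k • Δ k ω := by
        rw [Finset.sum_smul]
        rw [← Finset.sum_add_distrib]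
        exact Finset.sum_congr rfl fun k _ => smul_add (β k) α (Δ k ω)
      rw [this, hβsum, one_smul]
    have hJ : ∑ k, β k * D (α + Δ k ω) ≤ D (α + ∑ k, β k • Δ k ω) := by
      have := hDconc.le_map_sum (t := Finset.univ) (w := β)
        (p := fun k => α + Δ k ω) (fun k _ => hβ0 k) hβsum
        (fun k _ => Set.mem_univ _)
      rw [hrepr] at this
      simpa [smul_eq_mul] using this
    rw [hgapQ ω, hgapQα]
    simp only [hgapk, hgapkα]
    have hexp : (MQ - D α) - ∑ k, β k * (Mk k - D α)
        + ∑ k, β k * (Mk k - D (α + Δ k ω))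
        = MQ - ∑ k, β k * D (α + Δ k ω) := by
      simp only [mul_sub, Finset.sum_sub_distrib, ← Finset.sum_mul, hβsum, one_mul]
      ring
    rw [hexp]
    linarith
  -- integrate the pointwise inequality
  have hintR : Integrable (fun ω => locGap D Q α - ∑ k, β k * locGap D (S k) α
      + ∑ k, β k * locGap D (S k) (α + Δ k ω)) μ := by
    exact (integrable_const _).add
      (integrable_finset_sum _ fun k _ => (hintε k).const_mul (β k))
  have hmono := integral_mono hintQ hintR key
  have hR : ∫ ω, (locGap D Q α - ∑ k, β k * locGap D (S k) α
        + ∑ k, β k * locGap D (S k) (α + Δ k ω)) ∂μ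
      = locGap D Q α - ∑ k, β k * locGap D (S k) α
        + ∑ k, β k * ∫ ω, locGap D (S k) (α + Δ k ω) ∂μ := by
    rw [integral_add (integrable_const _)
        (integrable_finset_sum _ fun k _ => (hintε k).const_mul (β k)),
      integral_const, probReal_univ, one_smul,
      integral_finset_sum _ fun k _ => (hintε k).const_mul (β k)]
    simp [integral_const_mul]
  rw [hR] at hmono
  -- plug in the expected local improvement
  have himp' : ∑ k, β k * ∫ ω, locGap D (S k) (α + Δ k ω) ∂μ
      ≤ ∑ k, β k * (Θ k * locGap D (S k) α) :=
    Finset.sum_le_sum fun k _ => mul_le_mul_of_nonneg_left (himp k) (hβ0 k)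
  -- the minimum
  set b : ℝ := Finset.univ.inf' ⟨⟨0, hK⟩, Finset.mem_univ _⟩ fun k => (1 - Θ k) * β k
    with hb
  have hble : ∀ k, b ≤ (1 - Θ k) * β k := fun k =>
    Finset.inf'_le _ (Finset.mem_univ k)
  have hb0 : 0 ≤ b :=
    Finset.le_inf' _ _ fun k _ => mul_nonneg (by linarith [hΘ1 k]) (hβ0 k)
  have hgapk0 : ∀ k, 0 ≤ locGap D (S k) α := by
    intro k
    have : D α ≤ Mk k := le_csSup (hbddS k) ⟨α, fun i _ => rfl, rfl⟩
    rw [hgapkα k]; linarith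
  have hlow : ∑ k, b * locGap D (S k) α ≤ ∑ k, β k * (1 - Θ k) * locGap D (S k) α :=
    Finset.sum_le_sum fun k _ => by
      have := hble k
      nlinarith [hgapk0 k]
  have hsumlow : b * (lam * m * γ / (ρ + lam * m * γ) * locGap D Q α)
      ≤ ∑ k, β k * (1 - Θ k) * locGap D (S k) α := by
    calc b * (lam * m * γ / (ρ + lam * m * γ) * locGap D Q α)
        ≤ b * ∑ k, locGap D (S k) α := mul_le_mul_of_nonneg_left hlocglob hb0
      _ = ∑ k, b * locGap D (S k) α := Finset.mul_sum _ _ _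
      _ ≤ _ := hlow
  have hfinal : locGap D Q α - ∑ k, β k * locGap D (S k) α
      + ∑ k, β k * (Θ k * locGap D (S k) α)
      ≤ (1 - b * (lam * m * γ / (ρ + lam * m * γ))) * locGap D Q α := by
    have hcomb : ∑ k, β k * locGap D (S k) α - ∑ k, β k * (Θ k * locGap D (S k) α)
        = ∑ k, β k * (1 - Θ k) * locGap D (S k) α := by
      rw [← Finset.sum_sub_distrib]
      exact Finset.sum_congr rfl fun k _ => by ring
    have hring : (1 - b * (lam * m * γ / (ρ + lam * m * γ))) * locGap D Q α
        = locGap D Q α - b * (lam * m * γ / (ρ + lam * m * γ) * locGap D Q α) := by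
      ring
    rw [hring]
    linarith [hsumlow, hcomb]
  calc ∫ ω, locGap D Q (α + ∑ k, β k • Δ k ω) ∂μ
      ≤ locGap D Q α - ∑ k, β k * locGap D (S k) α
        + ∑ k, β k * ∫ ω, locGap D (S k) (α + Δ k ω) ∂μ := hmono
    _ ≤ locGap D Q α - ∑ k, β k * locGap D (S k) α
        + ∑ k, β k * (Θ k * locGap D (S k) α) := by linarith [himp']
    _ ≤ _ := hfinal
end

section
/- (Theorem 1: geometric convergence of GDCA-Tree at a tree node.) Suppose each ℓ*_i is convex. Let (Ω, 𝔉, μ) be a probability space, S_1, …, S_K pairwise disjoint subsets of {1, …, m}, Q = S_1 ∪ ⋯ ∪ S_K, β_1, …, β_K ∈ [0,1] with Σ_k β_k = 1, Θ_1, …, Θ_K ∈ [0,1), γ > 0, ρ ≥ 0, and write s = λmγ/(ρ + λmγ). Assume that for every β ∈ ℝ^m agreeing with a fixed initial α^{(0)} ∈ ℝ^m outside Q: (a) for each k the set {D(β') : β'_i = β_i for all i ∉ S_k} and the set {D(β') : β'_i = β_i for all i ∉ Q} are bounded above; and (b) Σ_{k=1}^K ε_{S_k}(β) ≥ s · ε_Q(β).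 Let T ≥ 1 and, for t = 1, …, T, let Δ_k^{(t)} : Ω → ℝ^m be measurable maps supported on S_k (i.e., (Δ_k^{(t)}(ω))_i = 0 for i ∉ S_k), and define the random iterates α^{(t)}(ω) = α^{(t−1)}(ω) + Σ_{k=1}^K β_k Δ_k^{(t)}(ω), with α^{(0)} constant. Assume for every t and k that ω ↦ D(α^{(t)}(ω)), ω ↦ ε_{S_k}(α^{(t−1)}(ω)), ω ↦ ε_{S_k}(α^{(t−1)}(ω) + Δ_k^{(t)}(ω)), and ω ↦ ε_Q(α^{(t)}(ω)) are integrable, and that the expected local improvement ∫ ε_{S_k}(α^{(t−1)}(ω) + Δ_k^{(t)}(ω)) dμ(ω) ≤ Θ_k · ∫ ε_{S_k}(α^{(t−1)}(ω)) dμ(ω) holds. Then ∫ ε_Q(α^{(T)}(ω)) dμ(ω) ≤ ( 1 − ( min_{k=1,…,K} (1 − Θ_k) β_k ) · λmγ/(ρ + λmγ) )^T · ε_Q(α^{(0)}). -/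
open scoped BigOperators
open MeasureTheory

lemma agree_set_eq {m : ℕ} (S : Set (Fin m)) {α α' : Fin m → ℝ}
    (h : ∀ i ∉ S, α' i = α i) :
    {β : Fin m → ℝ | ∀ i ∉ S, β i = α' i} = {β | ∀ i ∉ S, β i = α i} := by
  ext β
  constructor <;> intro hb i hi
  · rw [hb i hi, h i hi]
  · rw [hb i hi, ← h i hi]

lemma locGap_eq_of_agree {m : ℕ} (D : (Fin m → ℝ) → ℝ) (S : Set (Fin m))
    {α α' : Fin m → ℝ} (h : ∀ i ∉ S, α' i = α i) :
    locGap D S α' = sSup (D '' {β | ∀ i ∉ S, β i = α i}) - D α' := by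
  unfold locGap
  rw [agree_set_eq S h]

lemma locGap_nonneg {m : ℕ} {D : (Fin m → ℝ) → ℝ} {S : Set (Fin m)} {α : Fin m → ℝ}
    (hb : BddAbove (D '' {β | ∀ i ∉ S, β i = α i})) : 0 ≤ locGap D S α :=
  sub_nonneg.2 (le_csSup hb ⟨α, fun _ _ => rfl, rfl⟩)

/-- Theorem 1: geometric convergence of GDCA-Tree at a tree node `Q = S₁ ∪ ⋯ ∪ S_K`
after `T` iterations:
`𝔼[ε_Q(α^{(T)})] ≤ (1 − (minₖ (1 − Θₖ)βₖ)·λmγ/(ρ + λmγ))^T · ε_Q(α^{(0)})`. -/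
theorem gdca_tree_geometric_convergence
    (m d K : ℕ) (hm : 0 < m) (hd : 0 < d) (hK : 0 < K)
    (x : Fin m → EuclideanSpace ℝ (Fin d)) (hx : ∀ i, ‖x i‖ ≤ 1)
    (lam : ℝ) (hlam : 0 < lam)
    (ℓs : Fin m → ℝ → ℝ) (hconv : ∀ i, ConvexOn ℝ Set.univ (ℓs i))
    (A : (Fin m → ℝ) → EuclideanSpace ℝ (Fin d))
    (hA : ∀ α, A α = (1 / (lam * m)) • ∑ i, α i • x i)
    (D : (Fin m → ℝ) → ℝ)
    (hD : ∀ α, D α = -(lam / 2) * ‖A α‖ ^ 2 - (1 / m) * ∑ i, ℓs i (-(α i)))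
    (Ω : Type*) [MeasurableSpace Ω] (μ : Measure Ω) [IsProbabilityMeasure μ]
    (S : Fin K → Set (Fin m))
    (hdisj : ∀ k k', k ≠ k' → Disjoint (S k) (S k'))
    (Q : Set (Fin m)) (hQ : Q = ⋃ k, S k)
    (β : Fin K → ℝ) (hβ0 : ∀ k, 0 ≤ β k) (hβ1 : ∀ k, β k ≤ 1)
    (hβsum : ∑ k, β k = 1)
    (Θ : Fin K → ℝ) (hΘ0 : ∀ k, 0 ≤ Θ k) (hΘ1 : ∀ k, Θ k < 1)
    (γ ρ : ℝ) (hγ : 0 < γ) (hρ : 0 ≤ ρ)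
    (α0 : Fin m → ℝ)
    (hbddS : ∀ βv : Fin m → ℝ, (∀ i ∉ Q, βv i = α0 i) →
      ∀ k, BddAbove (D '' {β' | ∀ i ∉ S k, β' i = βv i}))
    (hbddQ : ∀ βv : Fin m → ℝ, (∀ i ∉ Q, βv i = α0 i) →
      BddAbove (D '' {β' | ∀ i ∉ Q, β' i = βv i}))
    (hlocglob : ∀ βv : Fin m → ℝ, (∀ i ∉ Q, βv i = α0 i) →
      lam * m * γ / (ρ + lam * m * γ) * locGap D Q βv ≤ ∑ k, locGap D (S k) βv)
    (T : ℕ) (hT : 1 ≤ T)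
    (Δ : Fin K → ℕ → Ω → Fin m → ℝ) (hmeas : ∀ k, ∀ t < T, Measurable (Δ k t))
    (hsupp : ∀ k, ∀ t < T, ∀ ω, ∀ i ∉ S k, Δ k t ω i = 0)
    (a : ℕ → Ω → Fin m → ℝ)
    (ha0 : ∀ ω, a 0 ω = α0)
    (hastep : ∀ t < T, ∀ ω, a (t + 1) ω = a t ω + ∑ k, β k • Δ k t ω)
    (hintD : ∀ t ≤ T, Integrable (fun ω => D (a t ω)) μ)
    (hintS : ∀ t < T, ∀ k, Integrable (fun ω => locGap D (S k) (a t ω)) μ)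
    (hintS' : ∀ t < T, ∀ k, Integrable (fun ω => locGap D (S k) (a t ω + Δ k t ω)) μ)
    (hintQ : ∀ t ≤ T, Integrable (fun ω => locGap D Q (a t ω)) μ)
    (himp : ∀ t < T, ∀ k, ∫ ω, locGap D (S k) (a t ω + Δ k t ω) ∂μ ≤
      Θ k * ∫ ω, locGap D (S k) (a t ω) ∂μ) :
    ∫ ω, locGap D Q (a T ω) ∂μ ≤
      (1 - (Finset.univ.inf' ⟨⟨0, hK⟩, Finset.mem_univ _⟩ fun k => (1 - Θ k) * β k) *
        (lam * m * γ / (ρ + lam * m * γ))) ^ T * locGap D Q α0 := by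

  have hm' : (0:ℝ) < m := by exact_mod_cast hm
  set c := (Finset.univ.inf' ⟨⟨0, hK⟩, Finset.mem_univ _⟩ fun k => (1 - Θ k) * β k : ℝ)
    with hc_def
  set s := lam * ↑m * γ / (ρ + lam * ↑m * γ) with hs_def
  have hnum : 0 < lam * ↑m * γ := by positivity
  have hden : 0 < ρ + lam * ↑m * γ := by positivity
  have hs0 : 0 ≤ s := le_of_lt (div_pos hnum hden)
  have hs1 : s ≤ 1 := by rw [hs_def]; exact div_le_one_of_le₀ (by linarith) hden.le
  have hck : ∀ k, c ≤ (1 - Θ k) * β k := fun k => Finset.inf'_le _ (Finset.mem_univ k)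
  have hc0 : 0 ≤ c := Finset.le_inf' _ _ fun k _ => mul_nonneg (by linarith [hΘ1 k]) (hβ0 k)
  have hc1 : c ≤ 1 := by
    have h0 := hck ⟨0, hK⟩
    nlinarith [hβ0 (⟨0, hK⟩ : Fin K), hβ1 (⟨0, hK⟩ : Fin K), hΘ0 (⟨0, hK⟩ : Fin K)]
  have hη0 : 0 ≤ 1 - c * s := by nlinarith
  -- iterates agree with α0 outside Q
  have hQs : ∀ k, S k ⊆ Q := fun k => hQ ▸ Set.subset_iUnion S k
  have hagree : ∀ t, t ≤ T → ∀ ω, ∀ i ∉ Q, a t ω i = α0 i := by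
    intro t
    induction t with
    | zero => intro _ ω i _; rw [ha0]
    | succ t ih =>
      intro ht ω i hi
      have hz : ∀ k, Δ k t ω i = 0 := fun k => hsupp k t (by omega) ω i fun hmem => hi (hQs k hmem)
      rw [hastep t (by omega) ω]
      simp only [Pi.add_apply, Finset.sum_apply, Pi.smul_apply, smul_eq_mul]
      simp [hz, ih (by omega) ω i hi]
  -- linearity of A
  have hAlin : IsLinearMap ℝ A := by
    constructor
    · intro v w
      simp [hA, add_smul, Finset.sum_add_distrib, smul_add]
    · intro r v
      simp only [hA, Pi.smul_apply, smul_eq_mul, Finset.smul_sum, smul_smul]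
      exact Finset.sum_congr rfl fun i _ => by ring_nf
  -- concavity of D
  have hnsq : ConvexOn ℝ Set.univ (fun y : EuclideanSpace ℝ (Fin d) => ‖y‖ ^ 2) := by
    refine ⟨convex_univ, fun p _ q _ u v hu hv huv => ?_⟩
    have h := norm_add_le (u • p) (v • q)
    rw [norm_smul, norm_smul] at h
    simp only [Real.norm_eq_abs, abs_of_nonneg hu, abs_of_nonneg hv] at h
    simp only [smul_eq_mul]
    nlinarith [norm_nonneg (u • p + v • q), norm_nonneg p, norm_nonneg q,
      sq_nonneg (‖p‖ - ‖q‖), mul_nonneg hu hv]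
  have h1conv : ConvexOn ℝ Set.univ (fun α : Fin m → ℝ => ‖A α‖ ^ 2) := by
    simpa [Function.comp_def] using hnsq.comp_affineMap (IsLinearMap.mk' A hAlin).toAffineMap
  have h2conv : ConvexOn ℝ Set.univ (fun α : Fin m → ℝ => ∑ i, ℓs i (-(α i))) := by
    refine ⟨convex_univ, fun p _ q _ u v hu hv huv => ?_⟩
    simp only [smul_eq_mul]
    calc ∑ i, ℓs i (-((u • p + v • q) i))
        = ∑ i, ℓs i (u • (-(p i)) + v • (-(q i))) := by
          refine Finset.sum_congr rfl fun i _ => ?_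
          simp only [Pi.add_apply, Pi.smul_apply, smul_eq_mul]; ring_nf
      _ ≤ ∑ i, (u * ℓs i (-(p i)) + v * ℓs i (-(q i))) := Finset.sum_le_sum fun i _ => by
          simpa using (hconv i).2 (Set.mem_univ (-(p i))) (Set.mem_univ (-(q i))) hu hv huv
      _ = u * ∑ i, ℓs i (-(p i)) + v * ∑ i, ℓs i (-(q i)) := by
          rw [Finset.sum_add_distrib, Finset.mul_sum, Finset.mul_sum]
  have hDconc : ConcaveOn ℝ Set.univ D := by
    have hneg : ConvexOn ℝ Set.univ
        (fun α : Fin m → ℝ => (lam/2) * ‖A α‖^2 + (1/(m:ℝ)) * ∑ i, ℓs i (-(α i))) := by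
      have := (h1conv.smul (c := lam/2) (by positivity)).add
        (h2conv.smul (c := 1/(m:ℝ)) (by positivity))
      simpa [smul_eq_mul, Pi.add_def] using this
    have hDeq : D = fun α : Fin m → ℝ =>
        -((lam/2) * ‖A α‖^2 + (1/(m:ℝ)) * ∑ i, ℓs i (-(α i))) :=
      funext fun α => by rw [hD]; ring
    rw [hDeq]
    exact hneg.neg
  -- Jensen step
  have hJensen : ∀ t, t < T → ∀ ω, ∑ k, β k * D (a t ω + Δ k t ω) ≤ D (a (t + 1) ω) := by
    intro t ht ω
    have h := hDconc.le_map_sum (t := Finset.univ) (w := β)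
      (p := fun k => a t ω + Δ k t ω) (fun k _ => hβ0 k) hβsum (fun k _ => Set.mem_univ _)
    have hz : ∑ k, β k • (a t ω + Δ k t ω) = a t ω + ∑ k, β k • Δ k t ω := by
      simp only [smul_add, Finset.sum_add_distrib]
      congr 1
      rw [← Finset.sum_smul, hβsum, one_smul]
    rw [hastep t ht ω]
    calc ∑ k, β k * D (a t ω + Δ k t ω) = ∑ k, β k • D (a t ω + Δ k t ω) := by simp
      _ ≤ D (∑ k, β k • (a t ω + Δ k t ω)) := h
      _ = D (a t ω + ∑ k, β k • Δ k t ω) := by rw [hz]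
  -- gap identities
  have hgapQ : ∀ t, t ≤ T → ∀ ω,
      locGap D Q (a t ω) = sSup (D '' {β' | ∀ i ∉ Q, β' i = α0 i}) - D (a t ω) :=
    fun t ht ω => locGap_eq_of_agree D Q (hagree t ht ω)
  have hgapS : ∀ t, t < T → ∀ k ω,
      locGap D (S k) (a t ω + Δ k t ω)
        = sSup (D '' {β' | ∀ i ∉ S k, β' i = a t ω i}) - D (a t ω + Δ k t ω) :=
    fun t ht k ω => locGap_eq_of_agree D (S k)
      (fun i hi => by simp [hsupp k t ht ω i hi])
  -- pointwise key inequality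
  have hkey : ∀ t, t < T → ∀ ω,
      locGap D Q (a (t + 1) ω) ≤ locGap D Q (a t ω)
        - ∑ k, β k * locGap D (S k) (a t ω)
        + ∑ k, β k * locGap D (S k) (a t ω + Δ k t ω) := by
    intro t ht ω
    have hJ := hJensen t ht ω
    have e1 : ∑ k, β k * locGap D (S k) (a t ω)
        = ∑ k, β k * sSup (D '' {β' | ∀ i ∉ S k, β' i = a t ω i}) - D (a t ω) := by
      simp only [locGap, mul_sub]
      rw [Finset.sum_sub_distrib, ← Finset.sum_mul, hβsum, one_mul]
    have e2 : ∑ k, β k * locGap D (S k) (a t ω + Δ k t ω)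
        = ∑ k, β k * sSup (D '' {β' | ∀ i ∉ S k, β' i = a t ω i})
          - ∑ k, β k * D (a t ω + Δ k t ω) := by
      simp only [hgapS t ht, mul_sub]
      rw [Finset.sum_sub_distrib]
    rw [hgapQ (t+1) (by omega) ω, hgapQ t ht.le ω]
    linarith [hJ, e1, e2]
  -- one-step contraction in expectation
  have hstep : ∀ t, t < T →
      ∫ ω, locGap D Q (a (t + 1) ω) ∂μ ≤ (1 - c * s) * ∫ ω, locGap D Q (a t ω) ∂μ := by
    intro t ht
    have hg : Integrable (fun ω => ∑ k, β k * locGap D (S k) (a t ω)) μ :=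
      integrable_finset_sum _ fun k _ => (hintS t ht k).const_mul _
    have hh : Integrable (fun ω => ∑ k, β k * locGap D (S k) (a t ω + Δ k t ω)) μ :=
      integrable_finset_sum _ fun k _ => (hintS' t ht k).const_mul _
    have h1 : ∫ ω, locGap D Q (a (t + 1) ω) ∂μ
        ≤ ∫ ω, (locGap D Q (a t ω) - ∑ k, β k * locGap D (S k) (a t ω)
            + ∑ k, β k * locGap D (S k) (a t ω + Δ k t ω)) ∂μ :=
      integral_mono (hintQ (t+1) (by omega)) (((hintQ t ht.le).sub hg).add hh)
        (fun ω => hkey t ht ω)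
    have h2 : ∫ ω, (locGap D Q (a t ω) - ∑ k, β k * locGap D (S k) (a t ω)
          + ∑ k, β k * locGap D (S k) (a t ω + Δ k t ω)) ∂μ
        = ∫ ω, locGap D Q (a t ω) ∂μ
          - ∑ k, β k * ∫ ω, locGap D (S k) (a t ω) ∂μ
          + ∑ k, β k * ∫ ω, locGap D (S k) (a t ω + Δ k t ω) ∂μ := by
      have hfg : Integrable
          (fun ω => locGap D Q (a t ω) - ∑ k, β k * locGap D (S k) (a t ω)) μ :=
        (hintQ t ht.le).sub hg
      rw [integral_add hfg hh, integral_sub (hintQ t ht.le) hg,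
        integral_finset_sum _ (fun k _ => (hintS t ht k).const_mul _),
        integral_finset_sum _ (fun k _ => (hintS' t ht k).const_mul _)]
      simp only [integral_const_mul]
    set Et := ∫ ω, locGap D Q (a t ω) ∂μ with hEt
    set Ik := fun k => ∫ ω, locGap D (S k) (a t ω) ∂μ with hIkdef
    have hIk0 : ∀ k, 0 ≤ Ik k := fun k =>
      integral_nonneg fun ω => locGap_nonneg (hbddS (a t ω) (hagree t ht.le ω) k)
    have h3 : ∑ k, β k * ∫ ω, locGap D (S k) (a t ω + Δ k t ω) ∂μ
        ≤ ∑ k, β k * (Θ k * Ik k) :=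
      Finset.sum_le_sum fun k _ => mul_le_mul_of_nonneg_left (himp t ht k) (hβ0 k)
    have h4 : s * Et ≤ ∑ k, Ik k := by
      have h := integral_mono ((hintQ t ht.le).const_mul s)
        (integrable_finset_sum _ fun k _ => hintS t ht k)
        (fun ω => hlocglob (a t ω) (hagree t ht.le ω))
      rwa [integral_const_mul, integral_finset_sum _ (fun k _ => hintS t ht k)] at h
    have h5 : c * ∑ k, Ik k ≤ ∑ k, (1 - Θ k) * β k * Ik k := by
      rw [Finset.mul_sum]
      exact Finset.sum_le_sum fun k _ => mul_le_mul_of_nonneg_right (hck k) (hIk0 k)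
    have h6 : ∑ k, β k * Ik k - ∑ k, β k * (Θ k * Ik k) = ∑ k, (1 - Θ k) * β k * Ik k := by
      rw [← Finset.sum_sub_distrib]
      exact Finset.sum_congr rfl fun k _ => by ring
    have h7 : c * (s * Et) ≤ c * ∑ k, Ik k := mul_le_mul_of_nonneg_left h4 hc0
    have hfin : (1 - c * s) * Et = Et - c * (s * Et) := by ring
    calc ∫ ω, locGap D Q (a (t + 1) ω) ∂μ
        ≤ Et - ∑ k, β k * Ik k + ∑ k, β k * ∫ ω, locGap D (S k) (a t ω + Δ k t ω) ∂μ :=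
          h1.trans (le_of_eq h2)
      _ ≤ (1 - c * s) * Et := by rw [hfin]; linarith [h3, h5, h6, h7]
  -- induction
  have hmain : ∀ t, t ≤ T →
      ∫ ω, locGap D Q (a t ω) ∂μ ≤ (1 - c * s) ^ t * locGap D Q α0 := by
    intro t
    induction t with
    | zero =>
      intro _
      have h0 : (fun ω => locGap D Q (a 0 ω)) = fun _ => locGap D Q α0 :=
        funext fun ω => by rw [ha0]
      rw [h0]
      simp
    | succ t ih =>
      intro ht
      refine le_trans (hstep t (by omega)) ?_
      calc (1 - c * s) * ∫ ω, locGap D Q (a t ω) ∂μ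
          ≤ (1 - c * s) * ((1 - c * s) ^ t * locGap D Q α0) :=
            mul_le_mul_of_nonneg_left (ih (by omega)) hη0
        _ = (1 - c * s) ^ (t + 1) * locGap D Q α0 := by ring
  exact hmain T le_rfl
end

section
/- (One-step local SDCA improvement underlying Proposition 1.) Suppose λ > 0, γ > 0, ‖x_i‖₂ ≤ 1 for all i, and each ℓ*_i is γ-strongly convex, i.e., b ↦ ℓ*_i(b) − (γ/2)b² is convex on ℝ. Let B ⊆ {1, …, m} be nonempty with |B| = m_B, let α ∈ ℝ^m, and assume the set {D(β) : β_i = α_i for all i ∉ B} is bounded above, so ε_B(α) is defined. For each i ∈ B let α^{⟨i⟩} = α + Δ_i e_i, where Δ_i ∈ ℝ maximizes c ↦ D(α + c e_i) (such a maximizer exists, since this function is strongly concave). Then (1/m_B) Σ_{i ∈ B} ( D(α^{⟨i⟩}) − D(α) ) ≥ ( λmγ/(1 + λmγ) ) · (1/m_B) · ε_B(α); equivalently, (1/m_B) Σ_{i ∈ B} ε_B(α^{⟨i⟩}) ≤ ( 1 − ( λmγ/(1 + λmγ) ) · (1/m_B) ) · ε_B(α). -/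
open scoped BigOperators

set_option maxHeartbeats 1000000

lemma Dupdate {m d : ℕ} (hm : 0 < m)
    (x : Fin m → EuclideanSpace ℝ (Fin d))
    (lam : ℝ) (hlam : 0 < lam)
    (ℓs : Fin m → ℝ → ℝ)
    (A : (Fin m → ℝ) → EuclideanSpace ℝ (Fin d))
    (hA : ∀ α, A α = (1 / (lam * m)) • ∑ i, α i • x i)
    (D : (Fin m → ℝ) → ℝ)
    (hD : ∀ α, D α = -(lam / 2) * ‖A α‖ ^ 2 - (1 / m) * ∑ i, ℓs i (-(α i)))
    (α : Fin m → ℝ) (i : Fin m) (c : ℝ) :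
    D (α + c • (Pi.single i 1 : Fin m → ℝ)) =
      D α - (c / m) * (inner ℝ (A α) (x i) : ℝ) - c ^ 2 / (2 * lam * m ^ 2) * ‖x i‖ ^ 2
        - (1 / m) * (ℓs i (-(α i + c)) - ℓs i (-(α i))) := by
  have hm' : (m : ℝ) ≠ 0 := Nat.cast_ne_zero.mpr hm.ne'
  have hlm : lam * m ≠ 0 := by positivity
  have hAi : A (α + c • (Pi.single i 1 : Fin m → ℝ)) = A α + (c / (lam * m)) • x i := by
    rw [hA, hA]
    have h1 : ∑ j, (α + c • (Pi.single i 1 : Fin m → ℝ)) j • x j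
        = (∑ j, α j • x j) + c • x i := by
      have : ∀ j, (α + c • (Pi.single i 1 : Fin m → ℝ)) j • x j
          = α j • x j + (c * (Pi.single i 1 : Fin m → ℝ) j) • x j := by
        intro j; simp [add_smul]
      simp_rw [this, Finset.sum_add_distrib]
      congr 1
      rw [Finset.sum_eq_single_of_mem i (Finset.mem_univ i)]
      · simp
      · intro j _ hj; simp [Pi.single_apply, hj]
    rw [h1, smul_add, smul_smul]
    congr 1
    rw [one_div, inv_mul_eq_div]
  have hnorm : ‖A (α + c • (Pi.single i 1 : Fin m → ℝ))‖ ^ 2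
      = ‖A α‖ ^ 2 + 2 * (c / (lam * m)) * (inner ℝ (A α) (x i) : ℝ)
        + (c / (lam * m)) ^ 2 * ‖x i‖ ^ 2 := by
    rw [hAi, norm_add_sq_real, real_inner_smul_right, norm_smul]
    rw [Real.norm_eq_abs, mul_pow, sq_abs]
    ring
  have hsum : ∑ j, ℓs j (-((α + c • (Pi.single i 1 : Fin m → ℝ)) j))
      = (∑ j, ℓs j (-(α j))) + (ℓs i (-(α i + c)) - ℓs i (-(α i))) := by
    have hfun : (fun j => ℓs j (-((α + c • (Pi.single i 1 : Fin m → ℝ)) j)))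
        = Function.update (fun j => ℓs j (-(α j))) i (ℓs i (-(α i + c))) := by
      funext j
      rcases eq_or_ne j i with rfl | hj
      · simp
      · simp [Function.update_of_ne hj, Pi.single_apply, hj]
    rw [hfun, Finset.sum_update_of_mem (Finset.mem_univ i),
      Finset.sum_sdiff_eq_sub (Finset.subset_univ {i})]
    simp
    ring
  rw [hD, hD, hnorm, hsum]
  field_simp
  ring

/-- One-step local SDCA improvement underlying Proposition 1: averaging the best
single-coordinate updates over `i ∈ B` gives an expected dual improvement of at
least `(λmγ/(1 + λmγ))·(1/m_B)·ε_B(α)`; equivalently, the expected local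
sub-optimality gap contracts by the factor `1 − (λmγ/(1 + λmγ))·(1/m_B)`. -/
theorem local_sdca_one_step_improvement
    (m d : ℕ) (hm : 0 < m) (hd : 0 < d)
    (x : Fin m → EuclideanSpace ℝ (Fin d)) (hx : ∀ i, ‖x i‖ ≤ 1)
    (lam γ : ℝ) (hlam : 0 < lam) (hγ : 0 < γ)
    (ℓs : Fin m → ℝ → ℝ)
    (hsc : ∀ i, ConvexOn ℝ Set.univ fun b => ℓs i b - γ / 2 * b ^ 2)
    (A : (Fin m → ℝ) → EuclideanSpace ℝ (Fin d))
    (hA : ∀ α, A α = (1 / (lam * m)) • ∑ i, α i • x i)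
    (D : (Fin m → ℝ) → ℝ)
    (hD : ∀ α, D α = -(lam / 2) * ‖A α‖ ^ 2 - (1 / m) * ∑ i, ℓs i (-(α i)))
    (B : Finset (Fin m)) (hB : B.Nonempty)
    (α : Fin m → ℝ)
    (hbdd : BddAbove (D '' {β | ∀ i ∉ (B : Set (Fin m)), β i = α i}))
    (Δ : Fin m → ℝ)
    (hmax : ∀ i ∈ B, ∀ c : ℝ,
      D (α + c • (Pi.single i 1 : Fin m → ℝ)) ≤ D (α + Δ i • (Pi.single i 1 : Fin m → ℝ))) :
    lam * m * γ / (1 + lam * m * γ) * (1 / (B.card : ℝ)) * locGap D ↑B α ≤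
      (1 / (B.card : ℝ)) * ∑ i ∈ B, (D (α + Δ i • (Pi.single i 1 : Fin m → ℝ)) - D α) ∧
    (1 / (B.card : ℝ)) * ∑ i ∈ B, locGap D ↑B (α + Δ i • (Pi.single i 1 : Fin m → ℝ)) ≤
      (1 - lam * m * γ / (1 + lam * m * γ) * (1 / (B.card : ℝ))) * locGap D ↑B α := by
  classical
  have hmpos : (0:ℝ) < m := by exact_mod_cast hm
  have hm' : (m : ℝ) ≠ 0 := ne_of_gt hmpos
  set s : ℝ := lam * m * γ / (1 + lam * m * γ) with hs_def
  have hden : (0:ℝ) < 1 + lam * m * γ := by positivity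
  have hs_pos : 0 < s := by positivity
  have hs_lt1 : s < 1 := by
    rw [hs_def, div_lt_one hden]; linarith
  have hs_id : s * (1 + lam * m * γ) = lam * m * γ := by
    rw [hs_def]; field_simp
  have hk2 : γ * (1 - s) = s / (lam * m) := by
    rw [eq_div_iff (by positivity : lam * (m:ℝ) ≠ 0)]
    nlinarith [hs_id]
  have hDu := Dupdate hm x lam hlam ℓs A hA D hD α
  set T : ℝ := ∑ i ∈ B, (D (α + Δ i • (Pi.single i 1 : Fin m → ℝ)) - D α) with hT_def
  -- key inequality: for every feasible β, s * (D β - D α) ≤ T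
  have key : ∀ β : Fin m → ℝ, (∀ i ∉ (B : Set (Fin m)), β i = α i) →
      s * (D β - D α) ≤ T := by
    intro β hβ
    -- per-coordinate bound
    have hper : ∀ i ∈ B,
        -(s / m) * ((β i - α i) * (inner ℝ (A α) (x i) : ℝ)
          + ℓs i (-(β i)) - ℓs i (-(α i)))
        ≤ D (α + Δ i • (Pi.single i 1 : Fin m → ℝ)) - D α := by
      intro i hi
      have h1 := hmax i hi (s * (β i - α i))
      have h2 := hDu i (s * (β i - α i))
      have hcv := (hsc i).2 (Set.mem_univ (-(α i))) (Set.mem_univ (-(β i)))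
        (by linarith : (0:ℝ) ≤ 1 - s) hs_pos.le (by ring)
      simp only [smul_eq_mul] at hcv
      have harg : (1 - s) * (-(α i)) + s * (-(β i)) = -(α i + s * (β i - α i)) := by ring
      rw [harg] at hcv
      have hcv' : ℓs i (-(α i + s * (β i - α i)))
          ≤ (1 - s) * ℓs i (-(α i)) + s * ℓs i (-(β i))
            - γ / 2 * s * (1 - s) * (β i - α i) ^ 2 := by nlinarith [hcv]
      have hx2 : ‖x i‖ ^ 2 ≤ 1 := by nlinarith [hx i, norm_nonneg (x i)]
      have hA1 : (s * (β i - α i)) ^ 2 / (2 * lam * m ^ 2) * ‖x i‖ ^ 2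
          ≤ γ / 2 * s * (1 - s) * (β i - α i) ^ 2 / m := by
        have hcoef : (0:ℝ) ≤ (s * (β i - α i)) ^ 2 / (2 * lam * m ^ 2) := by positivity
        have hstep : (s * (β i - α i)) ^ 2 / (2 * lam * m ^ 2) * ‖x i‖ ^ 2
            ≤ (s * (β i - α i)) ^ 2 / (2 * lam * m ^ 2) := by
          nlinarith [hcoef, hx2]
        have heq : (s * (β i - α i)) ^ 2 / (2 * lam * m ^ 2)
            = γ / 2 * s * (1 - s) * (β i - α i) ^ 2 / m := by
          have : γ / 2 * s * (1 - s) * (β i - α i) ^ 2 / m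
              = (γ * (1 - s)) * (s * (β i - α i) ^ 2 / (2 * m)) := by ring
          rw [this, hk2]
          field_simp
        linarith [hstep, heq.ge, heq.le]
      have hcvm : (1 / (m:ℝ)) * ℓs i (-(α i + s * (β i - α i)))
          ≤ (1 / (m:ℝ)) * ((1 - s) * ℓs i (-(α i)) + s * ℓs i (-(β i))
            - γ / 2 * s * (1 - s) * (β i - α i) ^ 2) :=
        mul_le_mul_of_nonneg_left hcv' (by positivity)
      have keyi : -(s / (m:ℝ)) * ((β i - α i) * (inner ℝ (A α) (x i) : ℝ)
          + ℓs i (-(β i)) - ℓs i (-(α i)))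
          ≤ D (α + (s * (β i - α i)) • (Pi.single i 1 : Fin m → ℝ)) - D α := by
        rw [h2]
        ring_nf
        ring_nf at hA1 hcvm
        linarith [hA1, hcvm]
      linarith [h1, keyi]
    have hsumB : ∑ i ∈ B, (-(s / m) * ((β i - α i) * (inner ℝ (A α) (x i) : ℝ)
          + ℓs i (-(β i)) - ℓs i (-(α i)))) ≤ T := Finset.sum_le_sum hper
    -- extend the sum over B to a sum over univ (terms vanish off B)
    have hext : ∑ i ∈ B, (-(s / m) * ((β i - α i) * (inner ℝ (A α) (x i) : ℝ)
          + ℓs i (-(β i)) - ℓs i (-(α i))))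
        = ∑ i, (-(s / m) * ((β i - α i) * (inner ℝ (A α) (x i) : ℝ)
          + ℓs i (-(β i)) - ℓs i (-(α i)))) := by
      refine Finset.sum_subset (Finset.subset_univ B) ?_
      intro i _ hiB
      have hβi : β i = α i := hβ i (by simpa using hiB)
      rw [hβi]; ring
    -- inner-product identity
    have hdiff : (lam * (m:ℝ)) • (A β - A α) = ∑ i, (β i - α i) • x i := by
      rw [hA, hA, ← smul_sub, ← Finset.sum_sub_distrib]
      simp_rw [← sub_smul]
      rw [smul_smul]
      rw [show lam * (m:ℝ) * (1 / (lam * m)) = 1 by field_simp]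
      rw [one_smul]
    have hinner : ∑ i, (β i - α i) * (inner ℝ (A α) (x i) : ℝ)
        = lam * m * ((inner ℝ (A α) (A β) : ℝ) - ‖A α‖ ^ 2) := by
      have h3 : (inner ℝ (A α) ((lam * (m:ℝ)) • (A β - A α)) : ℝ)
          = lam * m * ((inner ℝ (A α) (A β) : ℝ) - ‖A α‖ ^ 2) := by
        rw [real_inner_smul_right, inner_sub_right, real_inner_self_eq_norm_sq]
      rw [← h3, hdiff, inner_sum]
      simp_rw [real_inner_smul_right]
    -- norm identity
    have hns : ‖A β - A α‖ ^ 2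
        = ‖A β‖ ^ 2 - 2 * (inner ℝ (A α) (A β) : ℝ) + ‖A α‖ ^ 2 := by
      rw [norm_sub_sq_real, real_inner_comm]
    have hDβ := hD β
    have hDα := hD α
    have hnn : (0:ℝ) ≤ s * lam / 2 * ‖A β - A α‖ ^ 2 := by positivity
    have hexp : ∑ i, (-(s / m) * ((β i - α i) * (inner ℝ (A α) (x i) : ℝ)
        + ℓs i (-(β i)) - ℓs i (-(α i))))
        = -(s / (m:ℝ)) * ((∑ i, (β i - α i) * (inner ℝ (A α) (x i) : ℝ))
          + (∑ i, ℓs i (-(β i))) - ∑ i, ℓs i (-(α i))) := by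
      rw [← Finset.mul_sum, Finset.sum_sub_distrib, Finset.sum_add_distrib]
    calc s * (D β - D α)
        ≤ ∑ i, (-(s / m) * ((β i - α i) * (inner ℝ (A α) (x i) : ℝ)
            + ℓs i (-(β i)) - ℓs i (-(α i)))) := by
          rw [hexp, hinner, hDβ, hDα]
          have hns2 : s * lam / 2 * ‖A β - A α‖ ^ 2
              = s * lam / 2 * (‖A β‖ ^ 2 - 2 * (inner ℝ (A α) (A β) : ℝ) + ‖A α‖ ^ 2) := by
            rw [hns]
          have h9 : -(s / (m:ℝ)) * (lam * m * ((inner ℝ (A α) (A β) : ℝ) - ‖A α‖ ^ 2)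
              + (∑ i, ℓs i (-(β i))) - ∑ i, ℓs i (-(α i)))
              = -(s * lam) * ((inner ℝ (A α) (A β) : ℝ) - ‖A α‖ ^ 2)
                - s / m * (∑ i, ℓs i (-(β i))) + s / m * (∑ i, ℓs i (-(α i))) := by
            field_simp
            ring
          rw [h9]
          ring_nf
          ring_nf at hnn hns2
          linarith [hnn, hns2]
      _ = ∑ i ∈ B, (-(s / m) * ((β i - α i) * (inner ℝ (A α) (x i) : ℝ)
            + ℓs i (-(β i)) - ℓs i (-(α i)))) := hext.symm
      _ ≤ T := hsumB
  -- use the key inequality with the supremum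
  have hmemα : α ∈ {β : Fin m → ℝ | ∀ i ∉ (B : Set (Fin m)), β i = α i} := fun _ _ => rfl
  have hne : (D '' {β : Fin m → ℝ | ∀ i ∉ (B : Set (Fin m)), β i = α i}).Nonempty :=
    ⟨D α, α, hmemα, rfl⟩
  have hsup_le : sSup (D '' {β : Fin m → ℝ | ∀ i ∉ (B : Set (Fin m)), β i = α i})
      ≤ D α + T / s := by
    apply csSup_le hne
    rintro y ⟨β, hβ, rfl⟩
    have hkβ := key β hβ
    have h5 : D β - D α ≤ T / s := (le_div_iff₀' hs_pos).mpr hkβ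
    linarith
  have hG : s * locGap D ↑B α ≤ T := by
    unfold locGap
    have h6 : sSup (D '' {β : Fin m → ℝ | ∀ i ∉ (B : Set (Fin m)), β i = α i}) - D α
        ≤ T / s := by linarith
    calc s * (sSup (D '' {β : Fin m → ℝ | ∀ i ∉ (B : Set (Fin m)), β i = α i}) - D α)
        ≤ s * (T / s) := mul_le_mul_of_nonneg_left h6 hs_pos.le
      _ = T := by field_simp
  have hcard : (0:ℝ) < (B.card : ℝ) := by exact_mod_cast hB.card_pos
  have hcne : (B.card : ℝ) ≠ 0 := ne_of_gt hcard
  have hfirst : s * (1 / (B.card : ℝ)) * locGap D ↑B α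
      ≤ (1 / (B.card : ℝ)) * T := by
    have h7 := mul_le_mul_of_nonneg_left hG
      (le_of_lt (show (0:ℝ) < 1 / (B.card : ℝ) by positivity))
    ring_nf
    ring_nf at h7
    linarith
  constructor
  · exact hfirst
  · have hloc : ∀ i ∈ B, locGap D ↑B (α + Δ i • (Pi.single i 1 : Fin m → ℝ))
        = locGap D ↑B α + (D α - D (α + Δ i • (Pi.single i 1 : Fin m → ℝ))) := by
      intro i hi
      unfold locGap
      have hpt : ∀ j ∉ (B : Set (Fin m)),
          (α + Δ i • (Pi.single i 1 : Fin m → ℝ)) j = α j := by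
        intro j hj
        have hji : j ≠ i := by
          intro h
          exact hj (by simpa [h] using hi)
        simp [Pi.single_apply, hji]
      have hsets : {β : Fin m → ℝ | ∀ j ∉ (B : Set (Fin m)),
            β j = (α + Δ i • (Pi.single i 1 : Fin m → ℝ)) j}
          = {β : Fin m → ℝ | ∀ j ∉ (B : Set (Fin m)), β j = α j} := by
        ext β
        simp only [Set.mem_setOf_eq]
        constructor
        · exact fun h j hj => (h j hj).trans (hpt j hj)
        · exact fun h j hj => (h j hj).trans (hpt j hj).symm
      rw [hsets]
      ring
    have hsum2 : ∑ i ∈ B, locGap D ↑B (α + Δ i • (Pi.single i 1 : Fin m → ℝ))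
        = (B.card : ℝ) * locGap D ↑B α - T := by
      rw [Finset.sum_congr rfl hloc, Finset.sum_add_distrib, Finset.sum_const,
        nsmul_eq_mul]
      have h8 : ∑ i ∈ B, (D α - D (α + Δ i • (Pi.single i 1 : Fin m → ℝ))) = -T := by
        rw [hT_def, ← Finset.sum_neg_distrib]
        exact Finset.sum_congr rfl (fun i _ => by ring)
      rw [h8]
      ring
    rw [hsum2]
    have hLHS : (1 / (B.card : ℝ)) * ((B.card : ℝ) * locGap D ↑B α - T)
        = locGap D ↑B α - (1 / (B.card : ℝ)) * T := by
      field_simp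
    rw [hLHS]
    ring_nf
    ring_nf at hfirst
    linarith
end

section
/- (Proposition 1: geometric improvement of LocalSDCA at a leaf node.) Suppose λ > 0, γ > 0, ‖x_i‖₂ ≤ 1 for all i, and each ℓ*_i is γ-strongly convex. Let B ⊆ {1, …, m} be nonempty with |B| = m_B, let α^{(0)} ∈ ℝ^m, and assume for every β ∈ ℝ^m agreeing with α^{(0)} outside B that the set {D(β') : β'_i = β_i for all i ∉ B} is bounded above. Given a sequence of indices (i_1, …, i_{T_p}) ∈ B^{T_p}, define iterates by α^{(h)} = α^{(h−1)} + Δ_h e_{i_h}, where Δ_h maximizes c ↦ D(α^{(h−1)} + c e_{i_h}). Then the average over all m_B^{T_p} index sequences of the final local sub-optimality gap satisfies (1/m_B^{T_p}) Σ_{(i_1,…,i_{T_p}) ∈ B^{T_p}} ε_B(α^{(T_p)}) ≤ ( 1 − ( λmγ/(1 + λmγ) ) · (1/m_B) )^{T_p} · ε_B(α^{(0)}); i.e., Assumption 1 holds with Θ_p = (1 − (λmγ/(1 + λmγ)) · (1/m_B))^{T_p}. -/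
open scoped BigOperators

lemma sc_bound (γ : ℝ) (ℓ : ℝ → ℝ)
    (h : ConvexOn ℝ Set.univ fun b => ℓ b - γ / 2 * b ^ 2)
    (t p q : ℝ) (ht0 : 0 ≤ t) (ht1 : t ≤ 1) :
    ℓ ((1 - t) * p + t * q) ≤
      (1 - t) * ℓ p + t * ℓ q - γ / 2 * (t * (1 - t) * (p - q) ^ 2) := by
  have := h.2 (Set.mem_univ p) (Set.mem_univ q) (by linarith : (0:ℝ) ≤ 1 - t) ht0
    (by ring : (1 - t) + t = 1)
  simp only [smul_eq_mul] at this
  nlinarith [this]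

lemma D_line (m d : ℕ) (hm : 0 < m)
    (x : Fin m → EuclideanSpace ℝ (Fin d))
    (lam : ℝ) (hlam : 0 < lam)
    (ℓs : Fin m → ℝ → ℝ)
    (A : (Fin m → ℝ) → EuclideanSpace ℝ (Fin d))
    (hA : ∀ α, A α = (1 / (lam * m)) • ∑ i, α i • x i)
    (D : (Fin m → ℝ) → ℝ)
    (hD : ∀ α, D α = -(lam / 2) * ‖A α‖ ^ 2 - (1 / m) * ∑ i, ℓs i (-(α i)))
    (α : Fin m → ℝ) (i : Fin m) (c : ℝ) :
    D (α + c • (Pi.single i 1 : Fin m → ℝ)) =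
      D α - c / m * inner ℝ (A α) (x i) - c ^ 2 * ‖x i‖ ^ 2 / (2 * lam * m ^ 2)
        - 1 / m * (ℓs i (-(α i + c)) - ℓs i (-(α i))) := by
  have hm' : (0:ℝ) < m := by exact_mod_cast hm
  have hlm : lam * (m:ℝ) ≠ 0 := by positivity
  have hα' : ∀ j, (α + c • (Pi.single i 1 : Fin m → ℝ)) j
      = α j + (if j = i then c else 0) := by
    intro j
    by_cases hj : j = i <;> simp [hj, Pi.single_apply]
  -- vector part
  have hsum : ∑ j, (α + c • (Pi.single i 1 : Fin m → ℝ)) j • x j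
      = (∑ j, α j • x j) + c • x i := by
    simp only [hα', add_smul]
    rw [Finset.sum_add_distrib]
    congr 1
    simp [ite_smul]
  have hAv : A (α + c • (Pi.single i 1 : Fin m → ℝ)) = A α + (c / (lam * m)) • x i := by
    rw [hA, hA, hsum, smul_add, smul_smul]
    congr 2
    field_simp
  -- norm part
  have hnorm : ‖A (α + c • (Pi.single i 1 : Fin m → ℝ))‖ ^ 2
      = ‖A α‖ ^ 2 + 2 * (c / (lam * m)) * inner ℝ (A α) (x i)
        + (c / (lam * m)) ^ 2 * ‖x i‖ ^ 2 := by
    rw [hAv, norm_add_sq_real, real_inner_smul_right, norm_smul]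
    have : |c / (lam * m)| ^ 2 = (c / (lam*m))^2 := sq_abs _
    rw [Real.norm_eq_abs]
    ring_nf
    rw [sq_abs]
    ring
  -- loss part
  have hloss : ∑ j, ℓs j (-((α + c • (Pi.single i 1 : Fin m → ℝ)) j))
      = (∑ j, ℓs j (-(α j))) + (ℓs i (-(α i + c)) - ℓs i (-(α i))) := by
    simp only [hα']
    rw [← Finset.sum_erase_add _ _ (Finset.mem_univ i)]
    rw [show (∑ j, ℓs j (-(α j))) = ∑ j ∈ Finset.univ.erase i, ℓs j (-(α j)) + ℓs i (-(α i)) from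
      (Finset.sum_erase_add _ _ (Finset.mem_univ i)).symm]
    have : ∀ j ∈ Finset.univ.erase i,
        ℓs j (-(α j + if j = i then c else 0)) = ℓs j (-(α j)) := by
      intro j hj
      rw [if_neg (Finset.ne_of_mem_erase hj), add_zero]
    rw [Finset.sum_congr rfl this]
    simp
    ring
  rw [hD, hD, hnorm, hloss]
  have hl2 : lam * (m:ℝ) * (lam * m) = lam * (2 * lam * m^2) / 2 := by ring
  field_simp
  ring

lemma D_diff (m d : ℕ) (hm : 0 < m)
    (x : Fin m → EuclideanSpace ℝ (Fin d))
    (lam : ℝ) (hlam : 0 < lam)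
    (ℓs : Fin m → ℝ → ℝ)
    (A : (Fin m → ℝ) → EuclideanSpace ℝ (Fin d))
    (hA : ∀ α, A α = (1 / (lam * m)) • ∑ i, α i • x i)
    (D : (Fin m → ℝ) → ℝ)
    (hD : ∀ α, D α = -(lam / 2) * ‖A α‖ ^ 2 - (1 / m) * ∑ i, ℓs i (-(α i)))
    (B : Finset (Fin m)) (α u : Fin m → ℝ) (hu : ∀ j ∉ B, u j = α j) :
    D u = D α - (1 / m) * ∑ j ∈ B, (u j - α j) * inner ℝ (A α) (x j)
        - ‖∑ j ∈ B, (u j - α j) • x j‖ ^ 2 / (2 * lam * m ^ 2)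
        - (1 / m) * ∑ j ∈ B, (ℓs j (-(u j)) - ℓs j (-(α j))) := by
  have hm' : (0:ℝ) < m := by exact_mod_cast hm
  have hlm : lam * (m:ℝ) ≠ 0 := by positivity
  set w : EuclideanSpace ℝ (Fin d) := ∑ j ∈ B, (u j - α j) • x j with hw
  have hsum : ∑ j, u j • x j = (∑ j, α j • x j) + w := by
    have h1 : ∑ j, (u j - α j) • x j = w := by
      rw [hw]
      exact (Finset.sum_subset B.subset_univ (fun j _ hj => by
        rw [hu j hj]; simp)).symm
    calc ∑ j, u j • x j = ∑ j, (α j • x j + (u j - α j) • x j) := by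
          refine Finset.sum_congr rfl fun j _ => ?_
          rw [← add_smul]; ring_nf
      _ = (∑ j, α j • x j) + ∑ j, (u j - α j) • x j := Finset.sum_add_distrib
      _ = _ := by rw [h1]
  have hAu : A u = A α + (1 / (lam * m)) • w := by
    rw [hA, hA, hsum, smul_add]
  have hinner : inner ℝ (A α) ((1 / (lam * (m:ℝ))) • w)
      = (1 / (lam * m)) * ∑ j ∈ B, (u j - α j) * inner ℝ (A α) (x j) := by
    rw [real_inner_smul_right, hw, inner_sum]
    congr 1
    exact Finset.sum_congr rfl fun j _ => real_inner_smul_right _ _ _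
  have hnorm : ‖A u‖ ^ 2 = ‖A α‖ ^ 2
      + 2 * ((1 / (lam * m)) * ∑ j ∈ B, (u j - α j) * inner ℝ (A α) (x j))
      + (1 / (lam * m)) ^ 2 * ‖w‖ ^ 2 := by
    rw [hAu, norm_add_sq_real, hinner, norm_smul, Real.norm_eq_abs, mul_pow, sq_abs]
  have hloss : ∑ j, ℓs j (-(u j)) = (∑ j, ℓs j (-(α j)))
      + ∑ j ∈ B, (ℓs j (-(u j)) - ℓs j (-(α j))) := by
    have : ∑ j, (ℓs j (-(u j)) - ℓs j (-(α j))) = ∑ j ∈ B, (ℓs j (-(u j)) - ℓs j (-(α j))) := by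
      exact (Finset.sum_subset B.subset_univ (fun j _ hj => by rw [hu j hj]; simp)).symm
    rw [← this, Finset.sum_sub_distrib]
    ring
  rw [hD, hD, hnorm, hloss]
  field_simp
  ring

lemma arith_step (Dα Dp I Lp Lq X xn2 δ t lam mr γ : ℝ)
    (hm : 0 < mr) (hlam : 0 < lam)
    (hxn : 0 ≤ xn2) (hx2 : xn2 ≤ 1)
    (key2 : γ * (1 - t) = t / (lam * mr))
    (h1 : Dα - (t * δ) / mr * I - (t * δ) ^ 2 * xn2 / (2 * lam * mr ^ 2)
        - 1 / mr * (X - Lp) ≤ Dp)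
    (hcv : X ≤ (1 - t) * Lp + t * Lq - γ / 2 * (t * (1 - t) * δ ^ 2)) :
    Dα - t / mr * (δ * I) - t / mr * (Lq - Lp) ≤ Dp := by
  have h2 : 1 / mr * X ≤ 1 / mr * ((1 - t) * Lp + t * Lq - γ / 2 * (t * (1 - t) * δ ^ 2)) :=
    mul_le_mul_of_nonneg_left hcv (by positivity)
  have e0 : (t * δ) ^ 2 * xn2 ≤ (t * δ) ^ 2 := by nlinarith [sq_nonneg (t * δ)]
  have e1 : (t * δ) ^ 2 * xn2 / (2 * lam * mr ^ 2) ≤ (t * δ) ^ 2 / (2 * lam * mr ^ 2) :=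
    (div_le_div_iff_of_pos_right (by positivity)).2 e0
  have e3 : 1 / mr * (γ / 2 * (t * (1 - t) * δ ^ 2)) = (t * δ) ^ 2 / (2 * lam * mr ^ 2) := by
    linear_combination (δ ^ 2 * t / (2 * mr)) * key2
  ring_nf at h1 h2 e1 e3 ⊢; linarith

lemma lin_step (Du Dα S1 S2 W c tt mr : ℝ) (hW : 0 ≤ W) (htt : 0 ≤ tt)
    (h : Du = Dα - 1 / mr * S1 - W - 1 / mr * S2) :
    c * Dα + tt * (Du - Dα) ≤ c * Dα - tt / mr * S1 - tt / mr * S2 := by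
  have e : c * Dα + tt * (Du - Dα) = c * Dα - tt / mr * S1 - tt / mr * S2 - tt * W := by
    rw [h]; ring
  nlinarith [mul_nonneg htt hW]

lemma one_step (m d : ℕ) (hm : 0 < m)
    (x : Fin m → EuclideanSpace ℝ (Fin d)) (hx : ∀ i, ‖x i‖ ≤ 1)
    (lam γ : ℝ) (hlam : 0 < lam) (hγ : 0 < γ)
    (ℓs : Fin m → ℝ → ℝ)
    (hsc : ∀ i, ConvexOn ℝ Set.univ fun b => ℓs i b - γ / 2 * b ^ 2)
    (A : (Fin m → ℝ) → EuclideanSpace ℝ (Fin d))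
    (hA : ∀ α, A α = (1 / (lam * m)) • ∑ i, α i • x i)
    (D : (Fin m → ℝ) → ℝ)
    (hD : ∀ α, D α = -(lam / 2) * ‖A α‖ ^ 2 - (1 / m) * ∑ i, ℓs i (-(α i)))
    (B : Finset (Fin m))
    (α : Fin m → ℝ)
    (hbddA : BddAbove (D '' {β | ∀ j ∉ (B : Set (Fin m)), β j = α j}))
    (αp : {i // i ∈ B} → Fin m → ℝ)
    (hαp : ∀ (i : {i // i ∈ B}) (c : ℝ),
      D (α + c • (Pi.single (i : Fin m) 1 : Fin m → ℝ)) ≤ D (αp i)) :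
    ∑ i : {i // i ∈ B},
        (sSup (D '' {β | ∀ j ∉ (B : Set (Fin m)), β j = α j}) - D (αp i))
      ≤ ((B.card : ℝ) - lam * m * γ / (1 + lam * m * γ)) *
        (sSup (D '' {β | ∀ j ∉ (B : Set (Fin m)), β j = α j}) - D α) := by
  have hm' : (0:ℝ) < m := by exact_mod_cast hm
  set t : ℝ := lam * m * γ / (1 + lam * m * γ) with ht
  have hden : (0:ℝ) < 1 + lam * m * γ := by positivity
  have ht0 : 0 < t := by positivity
  have ht1 : t < 1 := by
    rw [ht, div_lt_one hden]; linarith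
  have key2 : γ * (1 - t) = t / (lam * m) := by
    rw [ht]; field_simp; ring
  set S' : ℝ := sSup (D '' {β | ∀ j ∉ (B : Set (Fin m)), β j = α j}) with hS'
  have hmemself : α ∈ {β | ∀ j ∉ (B : Set (Fin m)), β j = α j} := fun j _ => rfl
  have hne : (D '' {β | ∀ j ∉ (B : Set (Fin m)), β j = α j}).Nonempty :=
    ⟨D α, α, hmemself, rfl⟩
  -- the key claim
  have claim : ∀ u ∈ {β | ∀ j ∉ (B : Set (Fin m)), β j = α j},
      (B.card : ℝ) * D α + t * (D u - D α) ≤ ∑ i : {i // i ∈ B}, D (αp i) := by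
    intro u hu
    have hu' : ∀ j ∉ B, u j = α j := fun j hj => hu j (by simpa using hj)
    have hdiff := D_diff m d hm x lam hlam ℓs A hA D hD B α u hu'
    have per : ∀ i : {i // i ∈ B},
        D α - t / m * ((u i - α i) * inner ℝ (A α) (x i))
          - t / m * (ℓs i (-(u (i:Fin m))) - ℓs i (-(α (i:Fin m)))) ≤ D (αp i) := by
      intro i
      have h1 := hαp i (t * (u i - α i))
      rw [D_line m d hm x lam hlam ℓs A hA D hD α i (t * (u i - α i))] at h1
      have hcv := sc_bound γ (ℓs i) (hsc i) t (-(α (i:Fin m))) (-(u (i:Fin m)))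
        ht0.le ht1.le
      rw [show (1 - t) * (-(α (i:Fin m))) + t * (-(u (i:Fin m)))
          = -(α (i:Fin m) + t * (u (i:Fin m) - α (i:Fin m))) by ring] at hcv
      rw [show ((-(α (i:Fin m))) - (-(u (i:Fin m)))) ^ 2
          = (u (i:Fin m) - α (i:Fin m)) ^ 2 by ring] at hcv
      have hx2 : ‖x (i:Fin m)‖ ^ 2 ≤ 1 := by
        nlinarith [hx (i:Fin m), norm_nonneg (x (i:Fin m))]
      exact arith_step (D α) (D (αp i)) (inner ℝ (A α) (x (i:Fin m)))
        (ℓs i (-(α (i:Fin m)))) (ℓs i (-(u (i:Fin m))))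
        (ℓs i (-(α (i:Fin m) + t * (u (i:Fin m) - α (i:Fin m)))))
        (‖x (i:Fin m)‖ ^ 2) (u (i:Fin m) - α (i:Fin m)) t lam m γ hm' hlam
        (by positivity) hx2 key2 h1 hcv
    have hsum : ∑ i : {i // i ∈ B},
        (D α - t / m * ((u i - α i) * inner ℝ (A α) (x i))
          - t / m * (ℓs i (-(u (i:Fin m))) - ℓs i (-(α (i:Fin m)))))
        = (B.card : ℝ) * D α
          - t / m * ∑ j ∈ B, (u j - α j) * inner ℝ (A α) (x j)
          - t / m * ∑ j ∈ B, (ℓs j (-(u j)) - ℓs j (-(α j))) := by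
      rw [Finset.sum_sub_distrib, Finset.sum_sub_distrib, Finset.sum_const,
        Finset.card_univ, Fintype.card_coe, ← Finset.mul_sum, ← Finset.mul_sum,
        Finset.sum_coe_sort B (fun j => (u j - α j) * inner ℝ (A α) (x j)),
        Finset.sum_coe_sort B (fun j => ℓs j (-(u j)) - ℓs j (-(α j))),
        nsmul_eq_mul]
    have hWnn : 0 ≤ ‖∑ j ∈ B, (u j - α j) • x j‖ ^ 2 / (2 * lam * (m:ℝ) ^ 2) := by
      positivity
    calc (B.card : ℝ) * D α + t * (D u - D α)
        ≤ ∑ i : {i // i ∈ B},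
          (D α - t / m * ((u i - α i) * inner ℝ (A α) (x i))
            - t / m * (ℓs i (-(u (i:Fin m))) - ℓs i (-(α (i:Fin m))))) := by
          rw [hsum]
          exact lin_step _ _ _ _ _ _ _ _ hWnn ht0.le hdiff
      _ ≤ ∑ i : {i // i ∈ B}, D (αp i) := Finset.sum_le_sum fun i _ => per i
  -- conclude via csSup_le
  have hS'le : t * S' ≤ (∑ i : {i // i ∈ B}, D (αp i)) - (B.card : ℝ) * D α + t * D α := by
    have hle : S' ≤ ((∑ i : {i // i ∈ B}, D (αp i)) - (B.card : ℝ) * D α + t * D α) / t := by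
      apply csSup_le hne
      rintro y ⟨u, hu, rfl⟩
      rw [le_div_iff₀ ht0]
      have := claim u hu
      linarith [this]
    calc t * S' ≤ t * (((∑ i : {i // i ∈ B}, D (αp i)) - (B.card : ℝ) * D α + t * D α) / t) :=
          mul_le_mul_of_nonneg_left hle ht0.le
      _ = _ := by field_simp
  have hfinal : ∑ i : {i // i ∈ B}, (S' - D (αp i))
      = (B.card : ℝ) * S' - ∑ i : {i // i ∈ B}, D (αp i) := by
    rw [Finset.sum_sub_distrib, Finset.sum_const, Finset.card_univ, Fintype.card_coe,
      nsmul_eq_mul]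
  rw [hfinal]
  nlinarith [hS'le]


/-- Proposition 1: geometric improvement of LocalSDCA at a leaf node `B`.
Averaging over all `m_B^{T_p}` coordinate-index sequences, the final local
sub-optimality gap satisfies
`𝔼[ε_B(α^{(T_p)})] ≤ (1 − (λmγ/(1 + λmγ))·(1/m_B))^{T_p} · ε_B(α^{(0)})`. -/
theorem local_sdca_geometric_improvement
    (m d : ℕ) (hm : 0 < m) (hd : 0 < d)
    (x : Fin m → EuclideanSpace ℝ (Fin d)) (hx : ∀ i, ‖x i‖ ≤ 1)
    (lam γ : ℝ) (hlam : 0 < lam) (hγ : 0 < γ)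
    (ℓs : Fin m → ℝ → ℝ)
    (hsc : ∀ i, ConvexOn ℝ Set.univ fun b => ℓs i b - γ / 2 * b ^ 2)
    (A : (Fin m → ℝ) → EuclideanSpace ℝ (Fin d))
    (hA : ∀ α, A α = (1 / (lam * m)) • ∑ i, α i • x i)
    (D : (Fin m → ℝ) → ℝ)
    (hD : ∀ α, D α = -(lam / 2) * ‖A α‖ ^ 2 - (1 / m) * ∑ i, ℓs i (-(α i)))
    (B : Finset (Fin m)) (hB : B.Nonempty)
    (α0 : Fin m → ℝ)
    (hbdd : ∀ β : Fin m → ℝ, (∀ i ∉ (B : Set (Fin m)), β i = α0 i) →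
      BddAbove (D '' {β' | ∀ i ∉ (B : Set (Fin m)), β' i = β i}))
    (Tp : ℕ)
    (a : (Fin Tp → {i // i ∈ B}) → ℕ → Fin m → ℝ)
    (ha0 : ∀ seq, a seq 0 = α0)
    (haprefix : ∀ seq seq' (h : ℕ),
      (∀ h' : Fin Tp, (h' : ℕ) < h → seq h' = seq' h') → a seq h = a seq' h)
    (hastep : ∀ seq (h : Fin Tp), ∃ Δ : ℝ,
      a seq ((h : ℕ) + 1) =
        a seq h + Δ • (Pi.single (seq h : Fin m) 1 : Fin m → ℝ) ∧
      ∀ c : ℝ, D (a seq h + c • (Pi.single (seq h : Fin m) 1 : Fin m → ℝ)) ≤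
        D (a seq ((h : ℕ) + 1))) :
    (1 / (B.card : ℝ) ^ Tp) * ∑ seq : Fin Tp → {i // i ∈ B}, locGap D ↑B (a seq Tp) ≤
      (1 - lam * m * γ / (1 + lam * m * γ) * (1 / (B.card : ℝ))) ^ Tp *
        locGap D ↑B α0 := by
  classical
  have hmB0 : 0 < B.card := hB.card_pos
  have hmB : (0:ℝ) < (B.card : ℝ) := by exact_mod_cast hmB0
  have hmB1 : (1:ℝ) ≤ (B.card : ℝ) := by exact_mod_cast hmB0
  set t : ℝ := lam * m * γ / (1 + lam * m * γ) with ht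
  have hden : (0:ℝ) < 1 + lam * m * γ := by positivity
  have ht0 : 0 < t := by positivity
  have ht1 : t < 1 := by rw [ht, div_lt_one hden]; linarith
  have hΘ0 : 0 ≤ 1 - t * (1 / (B.card : ℝ)) := by
    have h1 : t * (1 / (B.card : ℝ)) ≤ t * 1 := by
      apply mul_le_mul_of_nonneg_left _ ht0.le
      rw [div_le_one hmB]; exact hmB1
    nlinarith
  set Sset : Set (Fin m → ℝ) := {β | ∀ j ∉ (B : Set (Fin m)), β j = α0 j} with hSset
  set S : ℝ := sSup (D '' Sset) with hS
  -- all iterates agree with α0 outside B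
  have hagree : ∀ seq (h : ℕ), h ≤ Tp → a seq h ∈ Sset := by
    intro seq h
    induction h with
    | zero => intro _; rw [ha0]; exact fun j _ => rfl
    | succ n ih =>
      intro hn j hj
      have hnT : n < Tp := hn
      obtain ⟨Δ, hstep, -⟩ := hastep seq ⟨n, hnT⟩
      have hstep' : a seq (n + 1)
          = a seq n + Δ • (Pi.single ((seq ⟨n, hnT⟩ : Fin m)) 1 : Fin m → ℝ) := hstep
      have hne : j ≠ (seq ⟨n, hnT⟩ : Fin m) := by
        intro hEq
        exact hj (by rw [hEq]; exact (seq ⟨n, hnT⟩).2)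
      have : a seq (n + 1) j = a seq n j := by
        rw [hstep']
        simp [Pi.single_apply, hne]
      rw [this]
      exact ih (Nat.le_of_lt hnT) j hj
  -- the agreement set relative to any iterate equals Sset
  have hsetEq : ∀ β ∈ Sset, {β' | ∀ j ∉ (B : Set (Fin m)), β' j = β j} = Sset := by
    intro β hβ
    ext β'
    constructor
    · intro hβ' j hj; rw [hβ' j hj, hβ j hj]
    · intro hβ' j hj; rw [hβ' j hj, hβ j hj]
  have hgap : ∀ β ∈ Sset, locGap D ↑B β = S - D β := by
    intro β hβ
    rw [locGap, hsetEq β hβ]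
  -- potential
  set F : ℕ → ℝ := fun h => ∑ seq : Fin Tp → {i // i ∈ B}, (S - D (a seq h)) with hF
  have hstep1 : ∀ h : ℕ, h < Tp → F (h + 1) ≤ (1 - t * (1 / (B.card : ℝ))) * F h := by
    intro h hh
    set hFin : Fin Tp := ⟨h, hh⟩ with hhFin
    set e := Equiv.piSplitAt hFin (fun _ : Fin Tp => {i // i ∈ B}) with he
    have hsplit : ∀ f : (Fin Tp → {i // i ∈ B}) → ℝ,
        ∑ seq, f seq = ∑ g : {j : Fin Tp // j ≠ hFin} → {i // i ∈ B},
          ∑ b : {i // i ∈ B}, f (e.symm (b, g)) := by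
      intro f
      rw [← Equiv.sum_comp e.symm f, Fintype.sum_prod_type]
      exact Finset.sum_comm
    have hat : ∀ (b : {i // i ∈ B}) (g : {j : Fin Tp // j ≠ hFin} → {i // i ∈ B}),
        e.symm (b, g) hFin = b := by
      intro b g
      simp [he, Equiv.piSplitAt_symm_apply]
    have hsame : ∀ (b b' : {i // i ∈ B}) (g : {j : Fin Tp // j ≠ hFin} → {i // i ∈ B}),
        a (e.symm (b, g)) h = a (e.symm (b', g)) h := by
      intro b b' g
      apply haprefix
      intro h' hh'
      have hne : h' ≠ hFin := by
        intro hEq; rw [hEq] at hh'; exact lt_irrefl _ hh'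
      simp [he, Equiv.piSplitAt_symm_apply, hne]
    obtain ⟨i0, hi0⟩ := hB
    set b0 : {i // i ∈ B} := ⟨i0, hi0⟩ with hb0
    rw [hF]
    simp only []
    rw [hsplit (fun seq => S - D (a seq (h+1))), hsplit (fun seq => S - D (a seq h))]
    rw [Finset.mul_sum]
    apply Finset.sum_le_sum
    intro g _
    set αg : Fin m → ℝ := a (e.symm (b0, g)) h with hαg
    have hαgS : αg ∈ Sset := hagree _ h (Nat.le_of_lt hh)
    set αp : {i // i ∈ B} → Fin m → ℝ := fun b => a (e.symm (b, g)) (h + 1) with hαp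
    have hαpprop : ∀ (b : {i // i ∈ B}) (c : ℝ),
        D (αg + c • (Pi.single (b : Fin m) 1 : Fin m → ℝ)) ≤ D (αp b) := by
      intro b c
      obtain ⟨Δ, -, hopt⟩ := hastep (e.symm (b, g)) hFin
      have := hopt c
      rw [hat b g] at this
      rw [hαg, hsame b0 b g]
      exact this
    have hos := one_step m d hm x hx lam γ hlam hγ ℓs hsc A hA D hD B αg
      (by rw [hsetEq αg hαgS]; exact hbdd α0 (fun j _ => rfl)) αp hαpprop
    rw [hsetEq αg hαgS] at hos
    have hsumA : ∑ b : {i // i ∈ B}, (S - D (a (e.symm (b, g)) (h + 1)))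
        = ∑ b : {i // i ∈ B}, (S - D (αp b)) := rfl
    have hsumB : ∑ b : {i // i ∈ B}, (S - D (a (e.symm (b, g)) h))
        = (B.card : ℝ) * (S - D αg) := by
      have : ∀ b : {i // i ∈ B}, S - D (a (e.symm (b, g)) h) = S - D αg := by
        intro b; rw [hαg, hsame b b0 g]
      rw [Finset.sum_congr rfl (fun b _ => this b), Finset.sum_const,
        Finset.card_univ, Fintype.card_coe, nsmul_eq_mul]
    rw [hsumA, hsumB]
    calc ∑ b : {i // i ∈ B}, (S - D (αp b))
        ≤ ((B.card : ℝ) - t) * (S - D αg) := hos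
      _ = (1 - t * (1 / (B.card : ℝ))) * ((B.card : ℝ) * (S - D αg)) := by
          have hc : (1 / (B.card : ℝ)) * (B.card : ℝ) = 1 :=
            one_div_mul_cancel hmB.ne'
          linear_combination (t * (S - D αg)) * hc
  -- induction
  have hFbound : ∀ h : ℕ, h ≤ Tp → F h ≤ (1 - t * (1 / (B.card : ℝ))) ^ h * F 0 := by
    intro h
    induction h with
    | zero => intro _; simp
    | succ n ih =>
      intro hn
      have hnT : n < Tp := hn
      calc F (n + 1) ≤ (1 - t * (1 / (B.card : ℝ))) * F n := hstep1 n hnT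
        _ ≤ (1 - t * (1 / (B.card : ℝ))) * ((1 - t * (1 / (B.card : ℝ))) ^ n * F 0) :=
            mul_le_mul_of_nonneg_left (ih (Nat.le_of_lt hnT)) hΘ0
        _ = (1 - t * (1 / (B.card : ℝ))) ^ (n + 1) * F 0 := by ring
  have hF0 : F 0 = ((B.card : ℝ)) ^ Tp * (S - D α0) := by
    rw [hF]
    simp only [ha0]
    rw [Finset.sum_const, Finset.card_univ, nsmul_eq_mul]
    congr 1
    rw [Fintype.card_fun]
    push_cast [Fintype.card_coe, Fintype.card_fin]
    ring
  have hgapsum : ∑ seq : Fin Tp → {i // i ∈ B}, locGap D ↑B (a seq Tp) = F Tp := by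
    rw [hF]
    exact Finset.sum_congr rfl fun seq _ => hgap _ (hagree seq Tp le_rfl)
  have hgap0 : locGap D ↑B α0 = S - D α0 := by
    rw [locGap]
  rw [hgapsum, hgap0]
  have hfinal := hFbound Tp le_rfl
  rw [hF0] at hfinal
  have hpow : (0:ℝ) < (B.card : ℝ) ^ Tp := by positivity
  calc (1 / (B.card : ℝ) ^ Tp) * F Tp
      ≤ (1 / (B.card : ℝ) ^ Tp) *
        ((1 - t * (1 / (B.card : ℝ))) ^ Tp * ((B.card : ℝ) ^ Tp * (S - D α0))) :=
        mul_le_mul_of_nonneg_left hfinal (by positivity)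
    _ = (1 - t * (1 / (B.card : ℝ))) ^ Tp * (S - D α0) := by
        have hc2 : (1 / (B.card : ℝ) ^ Tp) * (B.card : ℝ) ^ Tp = 1 :=
          one_div_mul_cancel (pow_ne_zero _ hmB.ne')
        linear_combination ((1 - t * (1 / (B.card : ℝ))) ^ Tp * (S - D α0)) * hc2
end
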